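/- arXiv:2102.03734 — 7 statements merged into one kernel-verified Lean document; each statement's English description precedes it below -/
import Mathlib

section
/- For every ε > 0, B > 0 and x ∈ ℝ with |x|^{1+ε} < B, the set R(x,B) is a compact subset of ℝ², and every (λ1, λ2) ∈ R(x,B) satisfies λ1 ≤ 1/(B^{1/(1+ε)} − x) and λ2 ≤ 1/(B − |x|^{1+ε}). -/
open scoped Classical

/-- The dual feasible region `R(x,B)`, where the term
`ε·λ1^{1+1/ε}/(λ2^{1/ε}(1+ε)^{1+1/ε})` is interpreted as `0` when `λ1 = 0` and as `+∞`
when `λ1 > 0` and `λ2 = 0` (so that the constraint fails in the latter case). -/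
noncomputable def Rset (ε B x : ℝ) : Set (ℝ × ℝ) :=
  {p | 0 ≤ p.1 ∧ 0 ≤ p.2 ∧
    (if p.1 = 0 then B * p.2 - x * p.1 - 1 ≤ 0
     else 0 < p.2 ∧
       ε * p.1 ^ (1 + 1 / ε) / (p.2 ^ (1 / ε) * (1 + ε) ^ (1 + 1 / ε))
         + B * p.2 - x * p.1 - 1 ≤ 0)}

lemma young_core (ε c l1 l2 : ℝ) (hε : 0 < ε) (hc : 0 ≤ c) (h1 : 0 ≤ l1) (h2 : 0 < l2) :
    c * l1 ≤ ε * l1 ^ (1 + 1 / ε) / (l2 ^ (1 / ε) * (1 + ε) ^ (1 + 1 / ε)) + c ^ (1 + ε) * l2 := by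
  have hp : (0:ℝ) < 1 + ε := by linarith
  have hconj : Real.HolderConjugate (1 + ε) ((1 + ε) / ε) := by
    rw [Real.holderConjugate_iff]
    constructor
    · linarith
    · field_simp
  have hlD : (0:ℝ) < l2 * (1 + ε) := by positivity
  set D : ℝ := (l2 * (1 + ε)) ^ (1 / (1 + ε)) with hDdef
  have hDpos : 0 < D := Real.rpow_pos_of_pos hlD _
  have key := Real.young_inequality_of_nonneg (a := c * D) (b := l1 / D)
    (by positivity) (by positivity) hconj
  have hab : c * D * (l1 / D) = c * l1 := by field_simp
  have hDp : D ^ (1 + ε) = l2 * (1 + ε) := by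
    rw [hDdef, ← Real.rpow_mul hlD.le, one_div_mul_cancel hp.ne', Real.rpow_one]
  have hDq : D ^ ((1 + ε) / ε) = l2 ^ (1 / ε) * (1 + ε) ^ (1 / ε) := by
    rw [hDdef, ← Real.rpow_mul hlD.le, show 1 / (1 + ε) * ((1 + ε) / ε) = 1 / ε by
      field_simp, Real.mul_rpow h2.le hp.le]
  have hap : (c * D) ^ (1 + ε) = c ^ (1 + ε) * (l2 * (1 + ε)) := by
    rw [Real.mul_rpow hc hDpos.le, hDp]
  have hbq : (l1 / D) ^ ((1 + ε) / ε) = l1 ^ ((1 + ε) / ε) / (l2 ^ (1 / ε) * (1 + ε) ^ (1 / ε)) := by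
    rw [Real.div_rpow h1 hDpos.le, hDq]
  have hqexp : (1:ℝ) + 1 / ε = (1 + ε) / ε := by field_simp; ring
  have hCC : (1 + ε) ^ ((1 + ε) / ε) = (1 + ε) * (1 + ε) ^ (1 / ε) := by
    rw [← hqexp, Real.rpow_add hp, Real.rpow_one]
  rw [hab, hap, hbq] at key
  have hl2pow : (0:ℝ) < l2 ^ (1 / ε) := Real.rpow_pos_of_pos h2 _
  have hepow : (0:ℝ) < (1 + ε) ^ (1 / ε) := Real.rpow_pos_of_pos hp _
  calc c * l1 ≤ c ^ (1 + ε) * (l2 * (1 + ε)) / (1 + ε)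
        + l1 ^ ((1 + ε) / ε) / (l2 ^ (1 / ε) * (1 + ε) ^ (1 / ε)) / ((1 + ε) / ε) := key
    _ = ε * l1 ^ (1 + 1 / ε) / (l2 ^ (1 / ε) * (1 + ε) ^ (1 + 1 / ε)) + c ^ (1 + ε) * l2 := by
        rw [hqexp, hCC]; field_simp; ring
lemma Rset_eq (ε B x : ℝ) (hε : 0 < ε) :
    Rset ε B x = {p : ℝ × ℝ | 0 ≤ p.1 ∧ 0 ≤ p.2 ∧
      ε * p.1 ^ (1 + 1 / ε) / (1 + ε) ^ (1 + 1 / ε)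
        + (B * p.2 - x * p.1 - 1) * p.2 ^ (1 / ε) ≤ 0} := by
  have hp : (0:ℝ) < 1 + ε := by linarith
  have hqpos : (0:ℝ) < 1 + 1 / ε := by positivity
  have hCpos : (0:ℝ) < (1 + ε) ^ ((1:ℝ) + 1 / ε) := Real.rpow_pos_of_pos hp _
  ext p
  simp only [Rset, Set.mem_setOf_eq]
  constructor
  · rintro ⟨h1, h2, h3⟩
    refine ⟨h1, h2, ?_⟩
    by_cases hz : p.1 = 0
    · rw [if_pos hz] at h3
      rw [hz] at h3 ⊢
      simp only [Real.zero_rpow hqpos.ne', mul_zero, zero_div, zero_add]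
      simp only [mul_zero] at h3
      have ht : (0:ℝ) ≤ p.2 ^ ((1:ℝ) / ε) := Real.rpow_nonneg h2 _
      exact mul_nonpos_of_nonpos_of_nonneg h3 ht
    · rw [if_neg hz] at h3
      obtain ⟨hp2, h3⟩ := h3
      have ht : (0:ℝ) < p.2 ^ ((1:ℝ) / ε) := Real.rpow_pos_of_pos hp2 _
      have hkey : ε * p.1 ^ (1 + 1 / ε) / (1 + ε) ^ (1 + 1 / ε)
          + (B * p.2 - x * p.1 - 1) * p.2 ^ (1 / ε)
          = (ε * p.1 ^ (1 + 1 / ε) / (p.2 ^ (1 / ε) * (1 + ε) ^ (1 + 1 / ε))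
            + B * p.2 - x * p.1 - 1) * p.2 ^ (1 / ε) := by
        field_simp; ring
      rw [hkey]
      exact mul_nonpos_of_nonpos_of_nonneg h3 ht.le
  · rintro ⟨h1, h2, h3⟩
    refine ⟨h1, h2, ?_⟩
    by_cases hz : p.1 = 0
    · rw [if_pos hz]
      rw [hz] at h3 ⊢
      simp only [mul_zero]
      simp only [Real.zero_rpow hqpos.ne', mul_zero, zero_div, zero_add] at h3
      rcases eq_or_lt_of_le h2 with h2' | h2'
      · rw [← h2']; norm_num
      · have ht : (0:ℝ) < p.2 ^ ((1:ℝ) / ε) := Real.rpow_pos_of_pos h2' _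
        have := (mul_le_mul_iff_left₀ ht).mp (h3.trans_eq (zero_mul _).symm)
        linarith
    · rw [if_neg hz]
      have hp1 : 0 < p.1 := lt_of_le_of_ne h1 (Ne.symm hz)
      have hpow1 : (0:ℝ) < p.1 ^ ((1:ℝ) + 1 / ε) := Real.rpow_pos_of_pos hp1 _
      have hp2 : 0 < p.2 := by
        rcases eq_or_lt_of_le h2 with h2' | h2'
        · exfalso
          rw [← h2', Real.zero_rpow (by positivity : (1:ℝ)/ε ≠ 0)] at h3
          simp only [mul_zero, add_zero] at h3
          nlinarith [div_pos (mul_pos hε hpow1) hCpos]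
        · exact h2'
      refine ⟨hp2, ?_⟩
      have ht : (0:ℝ) < p.2 ^ ((1:ℝ) / ε) := Real.rpow_pos_of_pos hp2 _
      have hkey : ε * p.1 ^ (1 + 1 / ε) / (1 + ε) ^ (1 + 1 / ε)
          + (B * p.2 - x * p.1 - 1) * p.2 ^ (1 / ε)
          = (ε * p.1 ^ (1 + 1 / ε) / (p.2 ^ (1 / ε) * (1 + ε) ^ (1 + 1 / ε))
            + B * p.2 - x * p.1 - 1) * p.2 ^ (1 / ε) := by
        field_simp; ring
      rw [hkey] at h3
      exact (mul_le_mul_iff_left₀ ht).mp (h3.trans_eq (zero_mul _).symm)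

lemma Rset_bounds (ε B x : ℝ) (hε : 0 < ε) (hB : 0 < B) (hx : |x| ^ (1 + ε) < B) :
    ∀ p ∈ Rset ε B x,
      p.1 ≤ 1 / (B ^ (1 / (1 + ε)) - x) ∧ p.2 ≤ 1 / (B - |x| ^ (1 + ε)) := by
  have hp : (0:ℝ) < 1 + ε := by linarith
  have habs : |x| < B ^ ((1:ℝ) / (1 + ε)) := by
    have h := Real.rpow_lt_rpow (Real.rpow_nonneg (abs_nonneg x) _) hx
      (by positivity : (0:ℝ) < 1 / (1 + ε))
    rwa [← Real.rpow_mul (abs_nonneg x), mul_one_div, div_self hp.ne', Real.rpow_one] at h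
  have hden1 : 0 < B ^ ((1:ℝ) / (1 + ε)) - x := by
    have := le_abs_self x; linarith
  have hden2 : 0 < B - |x| ^ ((1:ℝ) + ε) := by linarith
  rintro p ⟨h1, h2, h3⟩
  by_cases hz : p.1 = 0
  · rw [if_pos hz] at h3
    rw [hz] at h3
    constructor
    · rw [hz]; positivity
    · rw [le_div_iff₀ hden2]
      nlinarith [mul_nonneg h2 (Real.rpow_nonneg (abs_nonneg x) (1 + ε))]
  · rw [if_neg hz] at h3
    obtain ⟨hp2, h3⟩ := h3
    have hBpow : (B ^ ((1:ℝ) / (1 + ε))) ^ ((1:ℝ) + ε) = B := by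
      rw [← Real.rpow_mul hB.le, one_div_mul_cancel hp.ne', Real.rpow_one]
    have key1 := young_core ε (B ^ ((1:ℝ) / (1 + ε))) p.1 p.2 hε (by positivity) h1 hp2
    rw [hBpow] at key1
    have key2 := young_core ε |x| p.1 p.2 hε (abs_nonneg x) h1 hp2
    have hxa : x * p.1 ≤ |x| * p.1 := mul_le_mul_of_nonneg_right (le_abs_self x) h1
    constructor
    · rw [le_div_iff₀ hden1]; nlinarith
    · rw [le_div_iff₀ hden2]; nlinarith

/-- For `ε > 0`, `B > 0` and `|x|^{1+ε} < B`, the region `R(x,B)` is compact and every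
`(λ1, λ2) ∈ R(x,B)` satisfies `λ1 ≤ 1/(B^{1/(1+ε)} − x)` and `λ2 ≤ 1/(B − |x|^{1+ε})`. -/
theorem Rset_isCompact_and_bounds (ε B x : ℝ) (hε : 0 < ε) (hB : 0 < B)
    (hx : |x| ^ (1 + ε) < B) :
    IsCompact (Rset ε B x) ∧
      ∀ p ∈ Rset ε B x,
        p.1 ≤ 1 / (B ^ (1 / (1 + ε)) - x) ∧ p.2 ≤ 1 / (B - |x| ^ (1 + ε)) := by
  have hbd := Rset_bounds ε B x hε hB hx
  refine ⟨?_, hbd⟩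
  have hp : (0:ℝ) < 1 + ε := by linarith
  have hqpos : (0:ℝ) < 1 + 1 / ε := by positivity
  have hcont1 : Continuous fun t : ℝ => t ^ ((1:ℝ) + 1 / ε) :=
    continuous_iff_continuousAt.mpr fun y => Real.continuousAt_rpow_const y _ (Or.inr hqpos.le)
  have hcont2 : Continuous fun t : ℝ => t ^ ((1:ℝ) / ε) :=
    continuous_iff_continuousAt.mpr fun y =>
      Real.continuousAt_rpow_const y _ (Or.inr (by positivity))
  have hF : Continuous fun p : ℝ × ℝ =>
      ε * p.1 ^ (1 + 1 / ε) / (1 + ε) ^ (1 + 1 / ε)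
        + (B * p.2 - x * p.1 - 1) * p.2 ^ (1 / ε) :=
    ((continuous_const.mul (hcont1.comp continuous_fst)).div_const _).add
      ((((continuous_const.mul continuous_snd).sub
        (continuous_const.mul continuous_fst)).sub continuous_const).mul
          (hcont2.comp continuous_snd))
  have hclosed : IsClosed (Rset ε B x) := by
    rw [Rset_eq ε B x hε]
    exact (isClosed_le continuous_const continuous_fst).inter
      ((isClosed_le continuous_const continuous_snd).inter
        (isClosed_le hF continuous_const))
  refine IsCompact.of_isClosed_subset
    (isCompact_Icc.prod isCompact_Icc :
      IsCompact (Set.Icc (0:ℝ) (1 / (B ^ ((1:ℝ) / (1 + ε)) - x)) ×ˢ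
        Set.Icc (0:ℝ) (1 / (B - |x| ^ ((1:ℝ) + ε))))) hclosed ?_
  rintro p hp'
  obtain ⟨hb1, hb2⟩ := hbd p hp'
  obtain ⟨h1, h2, -⟩ := hp'
  exact ⟨⟨h1, hb1⟩, ⟨h2, hb2⟩⟩
end

section
/- For fixed ε > 0, B > 0 and η ∈ 𝓟(ℝ), the function x ↦ KLinf(η, x) is convex on the interval (−B^{1/(1+ε)}, B^{1/(1+ε)}): for all x1, x2 in this interval and λ ∈ (0,1), KLinf(η, λ x1 + (1−λ) x2) ≤ λ KLinf(η, x1) + (1−λ) KLinf(η, x2). -/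
open MeasureTheory
open scoped ENNReal Classical

/-- The class of probability measures on `ℝ` with `(1+ε)`-th absolute moment bounded by `B`. -/
def LBm (ε B : ℝ) : Set (Measure ℝ) :=
  {κ | IsProbabilityMeasure κ ∧ ∫⁻ y, ENNReal.ofReal (|y| ^ (1 + ε)) ∂κ ≤ ENNReal.ofReal B}

/-- The mean of a measure on `ℝ`. -/
noncomputable def mean (κ : Measure ℝ) : ℝ := ∫ y, y ∂κ

/-- Kullback-Leibler divergence `KL(η, κ) = ∫ log (dη/dκ) dη` if `η ≪ κ` (and the integral
is defined), and `+∞` otherwise. -/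
noncomputable def KL (η κ : Measure ℝ) : ℝ≥0∞ :=
  if η ≪ κ ∧ Integrable (fun y => Real.log ((η.rnDeriv κ y).toReal)) η
  then ENNReal.ofReal (∫ y, Real.log ((η.rnDeriv κ y).toReal) ∂η)
  else ⊤

/-- `KLinf(η, x) = inf { KL(η, κ) : κ ∈ 𝓛_B, m(κ) ≥ x }`. -/
noncomputable def KLinf (ε B : ℝ) (η : Measure ℝ) (x : ℝ) : ℝ≥0∞ :=
  ⨅ (κ : Measure ℝ) (_ : κ ∈ LBm ε B ∧ x ≤ mean κ), KL η κ

lemma log_combo_aux {a b c l : ℝ} (ha : 0 < a) (hb : 0 < b) (hc : 0 < c)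
    (hl0 : 0 < l) (hl1 : l < 1) (h : c⁻¹ = l * a⁻¹ + (1 - l) * b⁻¹) :
    Real.log c ≤ l * Real.log a + (1 - l) * Real.log b ∧
      |Real.log c| ≤ Real.log 2 + (|Real.log a| + |Real.log b|) := by
  have hia : (0:ℝ) < a⁻¹ := inv_pos.2 ha
  have hib : (0:ℝ) < b⁻¹ := inv_pos.2 hb
  have h1 : l * Real.log a⁻¹ + (1 - l) * Real.log b⁻¹ ≤ Real.log (l * a⁻¹ + (1 - l) * b⁻¹) := by
    have := strictConcaveOn_log_Ioi.concaveOn.2 (Set.mem_Ioi.2 hia) (Set.mem_Ioi.2 hib)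
      hl0.le (le_of_lt (by linarith : (0:ℝ) < 1 - l)) (by ring : l + (1 - l) = 1)
    simpa [smul_eq_mul] using this
  have hlogc : Real.log (l * a⁻¹ + (1 - l) * b⁻¹) = -Real.log c := by
    rw [← h, Real.log_inv]
  have hup : Real.log c ≤ l * Real.log a + (1 - l) * Real.log b := by
    have hb' : Real.log b⁻¹ = -Real.log b := Real.log_inv b
    have ha' : Real.log a⁻¹ = -Real.log a := Real.log_inv a
    rw [ha', hb'] at h1
    nlinarith [h1, hlogc]
  refine ⟨hup, abs_le.2 ⟨?_, ?_⟩⟩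
  · have hci : c⁻¹ ≤ a⁻¹ + b⁻¹ := by rw [h]; nlinarith [hia, hib]
    have h2 : a⁻¹ + b⁻¹ ≤ 2 * max a⁻¹ b⁻¹ := by
      have := le_max_left a⁻¹ b⁻¹; have := le_max_right a⁻¹ b⁻¹; linarith
    have h3 : Real.log c⁻¹ ≤ Real.log (2 * max a⁻¹ b⁻¹) :=
      Real.log_le_log (inv_pos.2 hc) (hci.trans h2)
    rw [Real.log_inv, Real.log_mul (by norm_num) (by positivity)] at h3
    have h4 : Real.log (max a⁻¹ b⁻¹) ≤ |Real.log a| + |Real.log b| := by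
      rcases max_choice a⁻¹ b⁻¹ with hm | hm <;> rw [hm, Real.log_inv]
      · have := neg_abs_le (Real.log a); have := abs_nonneg (Real.log b); linarith
      · have := neg_abs_le (Real.log b); have := abs_nonneg (Real.log a); linarith
    linarith
  · have h4 : l * Real.log a + (1-l) * Real.log b ≤ |Real.log a| + |Real.log b| := by
      have := le_abs_self (Real.log a); have := le_abs_self (Real.log b)
      nlinarith [abs_nonneg (Real.log a), abs_nonneg (Real.log b)]
    have : (0:ℝ) ≤ Real.log 2 := Real.log_nonneg (by norm_num)
    linarith [hup]

lemma mix_prob (κ1 κ2 : Measure ℝ) [IsProbabilityMeasure κ1] [IsProbabilityMeasure κ2]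
    {l : ℝ} (hl0 : 0 < l) (hl1 : l < 1) :
    IsProbabilityMeasure (ENNReal.ofReal l • κ1 + ENNReal.ofReal (1 - l) • κ2) := by
  constructor
  rw [Measure.add_apply, Measure.smul_apply, Measure.smul_apply, measure_univ, measure_univ,
    smul_eq_mul, smul_eq_mul, mul_one, mul_one, ← ENNReal.ofReal_add hl0.le (by linarith)]
  norm_num

lemma KL_mix (η κ1 κ2 : Measure ℝ) [IsProbabilityMeasure η] [IsProbabilityMeasure κ1]
    [IsProbabilityMeasure κ2] {l : ℝ} (hl0 : 0 < l) (hl1 : l < 1) :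
    KL η (ENNReal.ofReal l • κ1 + ENNReal.ofReal (1 - l) • κ2) ≤
      ENNReal.ofReal l * KL η κ1 + ENNReal.ofReal (1 - l) * KL η κ2 := by
  have hl0' : ENNReal.ofReal l ≠ 0 := (ENNReal.ofReal_pos.2 hl0).ne'
  have hl1' : ENNReal.ofReal (1 - l) ≠ 0 := (ENNReal.ofReal_pos.2 (by linarith)).ne'
  by_cases hk1 : η ≪ κ1 ∧ Integrable (fun y => Real.log ((η.rnDeriv κ1 y).toReal)) η
  swap
  · rw [show KL η κ1 = ⊤ from if_neg hk1, ENNReal.mul_top hl0', top_add]; exact le_top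
  by_cases hk2 : η ≪ κ2 ∧ Integrable (fun y => Real.log ((η.rnDeriv κ2 y).toReal)) η
  swap
  · rw [show KL η κ2 = ⊤ from if_neg hk2, ENNReal.mul_top hl1', add_top]; exact le_top
  haveI hf1 : IsFiniteMeasure (ENNReal.ofReal l • κ1) := by
    constructor
    rw [Measure.smul_apply, smul_eq_mul, measure_univ, mul_one]
    exact ENNReal.ofReal_lt_top
  haveI hf2 : IsFiniteMeasure (ENNReal.ofReal (1 - l) • κ2) := by
    constructor
    rw [Measure.smul_apply, smul_eq_mul, measure_univ, mul_one]
    exact ENNReal.ofReal_lt_top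
  set κ : Measure ℝ := ENNReal.ofReal l • κ1 + ENNReal.ofReal (1 - l) • κ2 with hκ
  haveI : IsProbabilityMeasure κ := mix_prob κ1 κ2 hl0 hl1
  have hac : η ≪ κ := by
    intro s hs
    rw [hκ, Measure.add_apply, Measure.smul_apply, smul_eq_mul] at hs
    have h1 : ENNReal.ofReal l * κ1 s = 0 := by
      have := add_eq_zero.1 hs
      exact this.1
    exact hk1.1 ((mul_eq_zero.1 h1).resolve_left hl0')
  -- a.e. identity for the inverse of the density
  have hs1 : (ENNReal.ofReal l • κ1).rnDeriv η =ᵐ[η] ENNReal.ofReal l • κ1.rnDeriv η :=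
    Measure.rnDeriv_smul_left_of_ne_top κ1 η ENNReal.ofReal_ne_top
  have hs2 : (ENNReal.ofReal (1-l) • κ2).rnDeriv η =ᵐ[η] ENNReal.ofReal (1-l) • κ2.rnDeriv η :=
    Measure.rnDeriv_smul_left_of_ne_top κ2 η ENNReal.ofReal_ne_top
  have hadd : κ.rnDeriv η =ᵐ[η]
      (ENNReal.ofReal l • κ1).rnDeriv η + (ENNReal.ofReal (1-l) • κ2).rnDeriv η :=
    Measure.rnDeriv_add _ _ _
  have hinv : (η.rnDeriv κ)⁻¹ =ᵐ[η] κ.rnDeriv η := Measure.inv_rnDeriv hac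
  have hinv1 : (η.rnDeriv κ1)⁻¹ =ᵐ[η] κ1.rnDeriv η := Measure.inv_rnDeriv hk1.1
  have hinv2 : (η.rnDeriv κ2)⁻¹ =ᵐ[η] κ2.rnDeriv η := Measure.inv_rnDeriv hk2.1
  have hpos1 : ∀ᵐ y ∂η, 0 < η.rnDeriv κ1 y := Measure.rnDeriv_pos hk1.1
  have hpos2 : ∀ᵐ y ∂η, 0 < η.rnDeriv κ2 y := Measure.rnDeriv_pos hk2.1
  have hposg : ∀ᵐ y ∂η, 0 < η.rnDeriv κ y := Measure.rnDeriv_pos hac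
  have hlt1 : ∀ᵐ y ∂η, η.rnDeriv κ1 y < ⊤ :=
    (Measure.rnDeriv_lt_top η κ1).filter_mono hk1.1.ae_le
  have hlt2 : ∀ᵐ y ∂η, η.rnDeriv κ2 y < ⊤ :=
    (Measure.rnDeriv_lt_top η κ2).filter_mono hk2.1.ae_le
  have hltg : ∀ᵐ y ∂η, η.rnDeriv κ y < ⊤ :=
    (Measure.rnDeriv_lt_top η κ).filter_mono hac.ae_le
  -- the pointwise log bounds
  have hptwise : ∀ᵐ y ∂η,
      Real.log ((η.rnDeriv κ y).toReal) ≤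
        l * Real.log ((η.rnDeriv κ1 y).toReal) + (1-l) * Real.log ((η.rnDeriv κ2 y).toReal) ∧
      |Real.log ((η.rnDeriv κ y).toReal)| ≤ Real.log 2 +
        (|Real.log ((η.rnDeriv κ1 y).toReal)| + |Real.log ((η.rnDeriv κ2 y).toReal)|) := by
    filter_upwards [hs1, hs2, hadd, hinv, hinv1, hinv2, hpos1, hpos2, hposg, hlt1, hlt2, hltg]
      with y e1 e2 e3 e4 e5 e6 p1 p2 pg t1 t2 tg
    simp only [Pi.inv_apply] at e4 e5 e6
    have key : (η.rnDeriv κ y)⁻¹ =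
        ENNReal.ofReal l * (η.rnDeriv κ1 y)⁻¹ + ENNReal.ofReal (1-l) * (η.rnDeriv κ2 y)⁻¹ := by
      rw [e4, e3, Pi.add_apply, e1, e2, Pi.smul_apply, Pi.smul_apply, smul_eq_mul, smul_eq_mul,
        e5, e6]
    have hne1 : (η.rnDeriv κ1 y)⁻¹ ≠ ⊤ := by simp [p1.ne']
    have hne2 : (η.rnDeriv κ2 y)⁻¹ ≠ ⊤ := by simp [p2.ne']
    have hreal : ((η.rnDeriv κ y).toReal)⁻¹ =
        l * ((η.rnDeriv κ1 y).toReal)⁻¹ + (1-l) * ((η.rnDeriv κ2 y).toReal)⁻¹ := by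
      rw [← ENNReal.toReal_inv, key, ENNReal.toReal_add (by finiteness) (by finiteness),
        ENNReal.toReal_mul, ENNReal.toReal_mul, ENNReal.toReal_ofReal hl0.le,
        ENNReal.toReal_ofReal (by linarith), ENNReal.toReal_inv, ENNReal.toReal_inv]
    exact log_combo_aux (ENNReal.toReal_pos p1.ne' t1.ne) (ENNReal.toReal_pos p2.ne' t2.ne)
      (ENNReal.toReal_pos pg.ne' tg.ne) hl0 hl1 hreal
  have hmeas : AEStronglyMeasurable (fun y => Real.log ((η.rnDeriv κ y).toReal)) η :=
    (Real.measurable_log.comp (Measure.measurable_rnDeriv η κ).ennreal_toReal).aestronglyMeasurable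
  have hbound : Integrable (fun y => Real.log 2 +
      (|Real.log ((η.rnDeriv κ1 y).toReal)| + |Real.log ((η.rnDeriv κ2 y).toReal)|)) η :=
    (integrable_const _).add (hk1.2.abs.add hk2.2.abs)
  have hint : Integrable (fun y => Real.log ((η.rnDeriv κ y).toReal)) η :=
    Integrable.mono' hbound hmeas (hptwise.mono fun y h => by
      simpa [Real.norm_eq_abs] using h.2)
  have hcomb : Integrable (fun y => l * Real.log ((η.rnDeriv κ1 y).toReal) +
      (1-l) * Real.log ((η.rnDeriv κ2 y).toReal)) η :=
    (hk1.2.const_mul l).add (hk2.2.const_mul (1-l))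
  have hIineq : ∫ y, Real.log ((η.rnDeriv κ y).toReal) ∂η ≤
      l * ∫ y, Real.log ((η.rnDeriv κ1 y).toReal) ∂η +
      (1-l) * ∫ y, Real.log ((η.rnDeriv κ2 y).toReal) ∂η := by
    have := integral_mono_ae hint hcomb (hptwise.mono fun y h => h.1)
    rwa [integral_add (hk1.2.const_mul l) (hk2.2.const_mul (1-l)),
      integral_const_mul, integral_const_mul] at this
  calc KL η κ = ENNReal.ofReal (∫ y, Real.log ((η.rnDeriv κ y).toReal) ∂η) := if_pos ⟨hac, hint⟩
    _ ≤ ENNReal.ofReal (l * ∫ y, Real.log ((η.rnDeriv κ1 y).toReal) ∂η +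
        (1-l) * ∫ y, Real.log ((η.rnDeriv κ2 y).toReal) ∂η) := ENNReal.ofReal_le_ofReal hIineq
    _ ≤ ENNReal.ofReal (l * ∫ y, Real.log ((η.rnDeriv κ1 y).toReal) ∂η) +
        ENNReal.ofReal ((1-l) * ∫ y, Real.log ((η.rnDeriv κ2 y).toReal) ∂η) :=
      ENNReal.ofReal_add_le
    _ = ENNReal.ofReal l * KL η κ1 + ENNReal.ofReal (1-l) * KL η κ2 := by
      rw [show KL η κ1 = _ from if_pos hk1, show KL η κ2 = _ from if_pos hk2,
        ENNReal.ofReal_mul hl0.le, ENNReal.ofReal_mul (by linarith)]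

lemma integrable_id_of_mem {ε B : ℝ} (hε : 0 < ε) {κ : Measure ℝ} (hκ : κ ∈ LBm ε B) :
    Integrable (fun y : ℝ => y) κ := by
  haveI := hκ.1
  refine ⟨measurable_id.aestronglyMeasurable, ?_⟩
  rw [hasFiniteIntegral_iff_norm]
  have hpt : ∀ y : ℝ, ENNReal.ofReal ‖y‖ ≤ 1 + ENNReal.ofReal (|y| ^ (1 + ε)) := by
    intro y
    rw [Real.norm_eq_abs]
    rcases le_total (|y|) 1 with h | h
    · calc ENNReal.ofReal (|y|) ≤ ENNReal.ofReal 1 := ENNReal.ofReal_le_ofReal h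
        _ ≤ 1 + _ := by simp
    · have h2 : |y| ≤ |y| ^ (1 + ε) := by
        calc |y| = |y| ^ (1:ℝ) := (Real.rpow_one _).symm
          _ ≤ |y| ^ (1 + ε) := Real.rpow_le_rpow_of_exponent_le h (by linarith)
      calc ENNReal.ofReal (|y|) ≤ ENNReal.ofReal (|y| ^ (1 + ε)) := ENNReal.ofReal_le_ofReal h2
        _ ≤ 1 + _ := le_add_self
  calc ∫⁻ y, ENNReal.ofReal ‖y‖ ∂κ ≤ ∫⁻ y, (1 + ENNReal.ofReal (|y| ^ (1 + ε))) ∂κ :=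
        lintegral_mono hpt
    _ = 1 + ∫⁻ y, ENNReal.ofReal (|y| ^ (1 + ε)) ∂κ := by
        rw [lintegral_add_left measurable_const, lintegral_const, measure_univ, mul_one]
    _ ≤ 1 + ENNReal.ofReal B := by exact add_le_add_right hκ.2 1
    _ < ⊤ := by finiteness

lemma mix_mem {ε B l : ℝ} (hl0 : 0 < l) (hl1 : l < 1) {κ1 κ2 : Measure ℝ}
    (h1 : κ1 ∈ LBm ε B) (h2 : κ2 ∈ LBm ε B) :
    ENNReal.ofReal l • κ1 + ENNReal.ofReal (1 - l) • κ2 ∈ LBm ε B := by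
  haveI := h1.1; haveI := h2.1
  have hsum : ENNReal.ofReal l + ENNReal.ofReal (1 - l) = 1 := by
    rw [← ENNReal.ofReal_add hl0.le (by linarith)]
    norm_num
  constructor
  · constructor
    rw [Measure.add_apply, Measure.smul_apply, Measure.smul_apply, measure_univ, measure_univ,
      smul_eq_mul, smul_eq_mul, mul_one, mul_one, hsum]
  · rw [lintegral_add_measure, lintegral_smul_measure, lintegral_smul_measure]
    calc ENNReal.ofReal l * _ + ENNReal.ofReal (1-l) * _
        ≤ ENNReal.ofReal l * ENNReal.ofReal B + ENNReal.ofReal (1-l) * ENNReal.ofReal B :=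
          add_le_add (mul_le_mul_right h1.2 _) (mul_le_mul_right h2.2 _)
      _ = ENNReal.ofReal B := by rw [← add_mul, hsum, one_mul]

lemma mix_mean {ε B l : ℝ} (hε : 0 < ε) (hl0 : 0 < l) (hl1 : l < 1) {κ1 κ2 : Measure ℝ}
    (h1 : κ1 ∈ LBm ε B) (h2 : κ2 ∈ LBm ε B) :
    mean (ENNReal.ofReal l • κ1 + ENNReal.ofReal (1 - l) • κ2) = l * mean κ1 + (1-l) * mean κ2 := by
  have hi1 : Integrable (fun y : ℝ => y) κ1 := integrable_id_of_mem hε h1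
  have hi2 : Integrable (fun y : ℝ => y) κ2 := integrable_id_of_mem hε h2
  rw [mean, integral_add_measure (hi1.smul_measure ENNReal.ofReal_ne_top)
    (hi2.smul_measure ENNReal.ofReal_ne_top), integral_smul_measure, integral_smul_measure,
    ENNReal.toReal_ofReal hl0.le, ENNReal.toReal_ofReal (by linarith), smul_eq_mul, smul_eq_mul,
    mean, mean]

/-- For fixed `ε > 0`, `B > 0` and a probability measure `η` on `ℝ`, the map
`x ↦ KLinf(η, x)` is convex on `(−B^{1/(1+ε)}, B^{1/(1+ε)})`. -/
theorem klinf_convex (ε B : ℝ) (hε : 0 < ε) (hB : 0 < B)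
    (η : Measure ℝ) (hη : IsProbabilityMeasure η) :
    ∀ x1 ∈ Set.Ioo (-(B ^ (1 / (1 + ε)))) (B ^ (1 / (1 + ε))),
    ∀ x2 ∈ Set.Ioo (-(B ^ (1 / (1 + ε)))) (B ^ (1 / (1 + ε))),
    ∀ l : ℝ, l ∈ Set.Ioo (0 : ℝ) 1 →
      KLinf ε B η (l * x1 + (1 - l) * x2) ≤
        ENNReal.ofReal l * KLinf ε B η x1 + ENNReal.ofReal (1 - l) * KLinf ε B η x2 := by
  intro x1 _ x2 _ l hl
  obtain ⟨hl0, hl1⟩ := hl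
  have hl0' : ENNReal.ofReal l ≠ 0 := (ENNReal.ofReal_pos.2 hl0).ne'
  have hl1' : ENNReal.ofReal (1 - l) ≠ 0 := (ENNReal.ofReal_pos.2 (by linarith)).ne'
  have hsum : ENNReal.ofReal l + ENNReal.ofReal (1 - l) = 1 := by
    rw [← ENNReal.ofReal_add hl0.le (by linarith)]; norm_num
  have key : ∀ κ1, (κ1 ∈ LBm ε B ∧ x1 ≤ mean κ1) → ∀ κ2, (κ2 ∈ LBm ε B ∧ x2 ≤ mean κ2) →
      KLinf ε B η (l * x1 + (1 - l) * x2) ≤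
        ENNReal.ofReal l * KL η κ1 + ENNReal.ofReal (1 - l) * KL η κ2 := by
    intro κ1 h1 κ2 h2
    haveI := h1.1.1; haveI := h2.1.1
    have hmem := mix_mem (B := B) hl0 hl1 h1.1 h2.1
    have hmean : l * x1 + (1 - l) * x2 ≤
        mean (ENNReal.ofReal l • κ1 + ENNReal.ofReal (1 - l) • κ2) := by
      rw [mix_mean hε hl0 hl1 h1.1 h2.1]
      have := h1.2; have := h2.2
      nlinarith
    exact le_trans (iInf₂_le _ ⟨hmem, hmean⟩) (KL_mix η κ1 κ2 hl0 hl1)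
  by_cases ht1 : KLinf ε B η x1 = ⊤
  · rw [ht1, ENNReal.mul_top hl0', top_add]; exact le_top
  by_cases ht2 : KLinf ε B η x2 = ⊤
  · rw [ht2, ENNReal.mul_top hl1', add_top]; exact le_top
  refine ENNReal.le_of_forall_pos_le_add fun δ hδ _ => ?_
  have hδ' : (δ : ℝ≥0∞) ≠ 0 := by exact_mod_cast hδ.ne'
  have e1 : KLinf ε B η x1 < KLinf ε B η x1 + δ := ENNReal.lt_add_right ht1 hδ'
  have e2 : KLinf ε B η x2 < KLinf ε B η x2 + δ := ENNReal.lt_add_right ht2 hδ'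
  rw [KLinf, iInf_lt_iff] at e1 e2
  obtain ⟨κ1, hκ1⟩ := e1
  obtain ⟨κ2, hκ2⟩ := e2
  rw [iInf_lt_iff] at hκ1 hκ2
  obtain ⟨h1, hKL1⟩ := hκ1
  obtain ⟨h2, hKL2⟩ := hκ2
  calc KLinf ε B η (l * x1 + (1 - l) * x2)
      ≤ ENNReal.ofReal l * KL η κ1 + ENNReal.ofReal (1 - l) * KL η κ2 := key κ1 h1 κ2 h2
    _ ≤ ENNReal.ofReal l * (KLinf ε B η x1 + δ) +
        ENNReal.ofReal (1 - l) * (KLinf ε B η x2 + δ) :=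
      add_le_add (mul_le_mul_right hKL1.le _) (mul_le_mul_right hKL2.le _)
    _ = (ENNReal.ofReal l * KLinf ε B η x1 + ENNReal.ofReal (1 - l) * KLinf ε B η x2) +
        (ENNReal.ofReal l + ENNReal.ofReal (1 - l)) * δ := by ring
    _ = _ := by rw [hsum, one_mul]
end

section
/- For fixed ε > 0, B > 0 and η ∈ 𝓟(ℝ), the function x ↦ KLinf(η, x) is continuous on the open interval (−B^{1/(1+ε)}, B^{1/(1+ε)}). -/
open MeasureTheory
open scoped ENNReal Classical

-- auxiliary lemmas

lemma klinf_mono (ε B : ℝ) (η : Measure ℝ) {y x : ℝ} (h : y ≤ x) :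
    KLinf ε B η y ≤ KLinf ε B η x :=
  le_iInf fun κ => le_iInf fun hκ => iInf₂_le κ ⟨hκ.1, h.trans hκ.2⟩

lemma integrable_id_of_mem_LBm (ε B : ℝ) (hε : 0 < ε) (κ : Measure ℝ)
    (hκ : κ ∈ LBm ε B) : Integrable (fun y : ℝ => y) κ := by
  obtain ⟨hprob, hmom⟩ := hκ
  refine ⟨measurable_id.aestronglyMeasurable, ?_⟩
  rw [hasFiniteIntegral_iff_norm]
  have hb : ∀ y : ℝ, ENNReal.ofReal ‖y‖ ≤ 1 + ENNReal.ofReal (|y| ^ (1 + ε)) := by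
    intro y
    rw [Real.norm_eq_abs]
    rcases le_total (|y|) 1 with h | h
    · exact le_add_right (by simpa using ENNReal.ofReal_le_ofReal h)
    · refine le_add_left (ENNReal.ofReal_le_ofReal ?_)
      calc |y| = |y| ^ (1 : ℝ) := (Real.rpow_one _).symm
        _ ≤ |y| ^ (1 + ε) := Real.rpow_le_rpow_of_exponent_le h (by linarith)
  calc (∫⁻ y, ENNReal.ofReal ‖y‖ ∂κ)
      ≤ ∫⁻ y, (1 + ENNReal.ofReal (|y| ^ (1 + ε))) ∂κ := lintegral_mono hb
    _ = κ Set.univ + ∫⁻ y, ENNReal.ofReal (|y| ^ (1 + ε)) ∂κ := by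
        rw [lintegral_add_left measurable_const]; simp
    _ ≤ 1 + ENNReal.ofReal B := by
        rw [measure_univ]; exact add_le_add_right hmom 1
    _ < ⊤ := by finiteness

lemma lintegral_negpart_log_rnDeriv_le (η ν : Measure ℝ) [SigmaFinite η] [SigmaFinite ν]
    (hην : η ≪ ν) :
    ∫⁻ z, ENNReal.ofReal (max (-(Real.log ((η.rnDeriv ν z).toReal))) 0) ∂η ≤ ν Set.univ := by
  set g := η.rnDeriv ν with hg
  have hgm : Measurable g := Measure.measurable_rnDeriv η ν
  have hFm : Measurable fun z => ENNReal.ofReal (max (-(Real.log ((g z).toReal))) 0) :=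
    ENNReal.measurable_ofReal.comp
      (((Real.measurable_log.comp (ENNReal.measurable_toReal.comp hgm)).neg).max measurable_const)
  rw [← lintegral_rnDeriv_mul hην hFm.aemeasurable]
  calc (∫⁻ z, g z * ENNReal.ofReal (max (-(Real.log ((g z).toReal))) 0) ∂ν)
      ≤ ∫⁻ _, 1 ∂ν := by
        refine lintegral_mono_ae ?_
        filter_upwards [Measure.rnDeriv_lt_top η ν] with z hz
        have hgz : g z = ENNReal.ofReal ((g z).toReal) := by
          rw [ENNReal.ofReal_toReal hz.ne]
        rw [hgz, ← ENNReal.ofReal_mul ENNReal.toReal_nonneg]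
        refine ENNReal.ofReal_le_one.mpr ?_
        rw [ENNReal.toReal_ofReal ENNReal.toReal_nonneg]
        set u := (g z).toReal with hu
        have hu0 : 0 ≤ u := ENNReal.toReal_nonneg
        rcases eq_or_lt_of_le hu0 with h0 | h0
        · simp [← h0]
        rcases le_total (-(Real.log u)) 0 with hl | hl
        · rw [max_eq_right hl]; simp
        · rw [max_eq_left hl]
          have hlog : Real.log u⁻¹ ≤ u⁻¹ - 1 :=
            Real.log_le_sub_one_of_pos (inv_pos.2 h0)
          rw [Real.log_inv] at hlog
          have huu : u * u⁻¹ = 1 := mul_inv_cancel₀ h0.ne'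
          nlinarith [mul_le_mul_of_nonneg_left hlog hu0]
    _ = ν Set.univ := by simp

lemma klinf_le_add (ε B : ℝ) (hε : 0 < ε) (hB : 0 < B) (η : Measure ℝ)
    (hη : IsProbabilityMeasure η) {x y : ℝ} (hyx : y ≤ x)
    (hx : x < B ^ (1 / (1 + ε))) :
    KLinf ε B η x ≤ KLinf ε B η y +
      ENNReal.ofReal (Real.log ((B ^ (1 / (1 + ε)) - y) / (B ^ (1 / (1 + ε)) - x))) := by
  set c : ℝ := B ^ (1 / (1 + ε)) with hcdef
  have hc0 : 0 < c := Real.rpow_pos_of_pos hB _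
  have hcx : 0 < c - x := sub_pos.2 hx
  have hcy : 0 < c - y := by linarith
  set t : ℝ := (x - y) / (c - y) with htdef
  have ht0 : 0 ≤ t := div_nonneg (by linarith) hcy.le
  have ht1 : t < 1 := (div_lt_one hcy).2 (by linarith)
  have htc : t * (c - y) = x - y := div_mul_cancel₀ _ hcy.ne'
  have h1t : 1 - t = (c - x) / (c - y) := by
    field_simp [htdef]
    linear_combination -htc
  set C : ℝ := Real.log ((c - y) / (c - x)) with hCdef
  have hCinv : (1 - t)⁻¹ = (c - y) / (c - x) := by
    rw [h1t]; rw [inv_div]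
  set e : ℝ≥0∞ := ENNReal.ofReal C with hedef
  have he_ne_top : e ≠ ⊤ := ENNReal.ofReal_ne_top
  -- the key measure construction
  have key : ∀ κ : Measure ℝ, (κ ∈ LBm ε B ∧ y ≤ mean κ) →
      ∃ κ' : Measure ℝ, (κ' ∈ LBm ε B ∧ x ≤ mean κ') ∧ KL η κ' ≤ KL η κ + e := by
    intro κ hκ
    obtain ⟨⟨hκprob, hκmom⟩, hκmean⟩ := hκ
    set a : ℝ≥0∞ := ENNReal.ofReal (1 - t) with hadef
    set b : ℝ≥0∞ := ENNReal.ofReal t with hbdef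
    have hab : a + b = 1 := by
      rw [hadef, hbdef, ← ENNReal.ofReal_add (by linarith) ht0]; norm_num
    have ha_ne_top : a ≠ ⊤ := ENNReal.ofReal_ne_top
    have hb_ne_top : b ≠ ⊤ := ENNReal.ofReal_ne_top
    have ha_ne : a ≠ 0 := (ENNReal.ofReal_pos.2 (by linarith)).ne'
    set κ' : Measure ℝ := a • κ + b • Measure.dirac c with hκ'def
    haveI : IsProbabilityMeasure κ' := by
      constructor
      rw [hκ'def]
      simp only [Measure.coe_add, Pi.add_apply, Measure.coe_smul, Pi.smul_apply,
        smul_eq_mul, measure_univ, mul_one, hab]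
    have hψm : Measurable fun z : ℝ => ENNReal.ofReal (|z| ^ (1 + ε)) :=
      ENNReal.measurable_ofReal.comp
        ((continuous_abs.rpow_const fun _ => Or.inr (by linarith)).measurable)
    have hψc : ENNReal.ofReal (|c| ^ (1 + ε)) = ENNReal.ofReal B := by
      rw [abs_of_pos hc0]
      congr 1
      rw [hcdef, ← Real.rpow_mul hB.le]
      rw [one_div, inv_mul_cancel₀ (by linarith : (1 : ℝ) + ε ≠ 0), Real.rpow_one]
    have hκ'mom : ∫⁻ z, ENNReal.ofReal (|z| ^ (1 + ε)) ∂κ' ≤ ENNReal.ofReal B := by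
      rw [hκ'def, lintegral_add_measure, lintegral_smul_measure, lintegral_smul_measure,
        lintegral_dirac' c hψm, hψc]
      calc a * (∫⁻ z, ENNReal.ofReal (|z| ^ (1 + ε)) ∂κ) + b * ENNReal.ofReal B
          ≤ a * ENNReal.ofReal B + b * ENNReal.ofReal B :=
            add_le_add_left (mul_le_mul_right hκmom a) _
        _ = (a + b) * ENNReal.ofReal B := (add_mul a b _).symm
        _ = ENNReal.ofReal B := by rw [hab, one_mul]
    have hκint : Integrable (fun z : ℝ => z) κ :=
      integrable_id_of_mem_LBm ε B hε κ ⟨hκprob, hκmom⟩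
    have hδint : Integrable (fun z : ℝ => z) (Measure.dirac c) := by
      refine ⟨measurable_id.aestronglyMeasurable, ?_⟩
      rw [hasFiniteIntegral_iff_norm]
      have hm : Measurable fun z : ℝ => ENNReal.ofReal ‖z‖ :=
        ENNReal.measurable_ofReal.comp measurable_norm
      rw [lintegral_dirac' c hm]
      exact ENNReal.ofReal_lt_top
    have hκ'mean : x ≤ mean κ' := by
      have : mean κ' = (1 - t) * mean κ + t * c := by
        rw [mean, hκ'def, integral_add_measure (hκint.smul_measure ha_ne_top)
          (hδint.smul_measure hb_ne_top), integral_smul_measure, integral_smul_measure,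
          integral_dirac, hadef, hbdef, ENNReal.toReal_ofReal (by linarith),
          ENNReal.toReal_ofReal ht0, mean]
        simp [smul_eq_mul]
      rw [this]
      have h1 : (1 - t) * y ≤ (1 - t) * mean κ :=
        mul_le_mul_of_nonneg_left hκmean (by linarith)
      nlinarith [htc]
    refine ⟨κ', ⟨⟨‹IsProbabilityMeasure κ'›, hκ'mom⟩, hκ'mean⟩, ?_⟩
    -- the KL bound
    by_cases hKL : η ≪ κ ∧ Integrable (fun z => Real.log ((η.rnDeriv κ z).toReal)) η
    swap
    · have hktop : KL η κ = ⊤ := by rw [KL]; exact if_neg hKL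
      rw [hktop, top_add]; exact le_top
    obtain ⟨hac, hint⟩ := hKL
    have hκκ' : κ ≪ κ' := by
      refine Measure.AbsolutelyContinuous.mk fun s hs h0 => ?_
      rw [hκ'def] at h0
      simp only [Measure.coe_add, Pi.add_apply, Measure.coe_smul, Pi.smul_apply,
        smul_eq_mul] at h0
      have := (add_eq_zero.1 h0).1
      exact (mul_eq_zero.1 this).resolve_left ha_ne
    have hac' : η ≪ κ' := hac.trans hκκ'
    set f := η.rnDeriv κ with hfdef
    set g := η.rnDeriv κ' with hgdef
    have hfm : Measurable f := Measure.measurable_rnDeriv η κ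
    have hgm : Measurable g := Measure.measurable_rnDeriv η κ'
    -- a * g ≤ f  κ-a.e.
    have hg_le : ∀ᵐ z ∂κ, a * g z ≤ f z := by
      refine ae_le_of_forall_setLIntegral_le_of_sigmaFinite
        (hgm.const_mul a) fun s hs _ => ?_
      calc (∫⁻ z in s, a * g z ∂κ) = a * ∫⁻ z in s, g z ∂κ :=
            lintegral_const_mul a hgm
        _ = ∫⁻ z in s, g z ∂(a • κ) := by
            rw [Measure.restrict_smul, lintegral_smul_measure, smul_eq_mul]
        _ ≤ ∫⁻ z in s, g z ∂κ' := by
            refine lintegral_mono' (Measure.restrict_mono subset_rfl ?_) le_rfl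
            rw [hκ'def]; exact Measure.le_add_right le_rfl
        _ ≤ η s := Measure.setLIntegral_rnDeriv_le s
        _ = ∫⁻ z in s, f z ∂κ := (Measure.setLIntegral_rnDeriv hac s).symm
    have hg_le' : ∀ᵐ z ∂η, g z ≤ a⁻¹ * f z := by
      filter_upwards [hg_le.filter_mono hac.ae_le] with z hz
      calc g z = a⁻¹ * (a * g z) := by
            rw [← mul_assoc, ENNReal.inv_mul_cancel ha_ne ha_ne_top, one_mul]
        _ ≤ a⁻¹ * f z := mul_le_mul_right hz _
    have hf_pos : ∀ᵐ z ∂η, 0 < f z := Measure.rnDeriv_pos hac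
    have hf_fin : ∀ᵐ z ∂η, f z < ⊤ := (Measure.rnDeriv_lt_top η κ).filter_mono hac.ae_le
    have hg_pos : ∀ᵐ z ∂η, 0 < g z := Measure.rnDeriv_pos hac'
    have hg_fin : ∀ᵐ z ∂η, g z < ⊤ := (Measure.rnDeriv_lt_top η κ').filter_mono hac'.ae_le
    -- pointwise log bound
    have hlog : ∀ᵐ z ∂η, Real.log ((g z).toReal) ≤ C + Real.log ((f z).toReal) := by
      filter_upwards [hg_le', hf_pos, hf_fin, hg_pos, hg_fin] with z h1 h2 h3 h4 h5
      have hu : 0 < (g z).toReal := ENNReal.toReal_pos h4.ne' h5.ne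
      have hv : 0 < (f z).toReal := ENNReal.toReal_pos h2.ne' h3.ne
      have hafin : a⁻¹ * f z ≠ ⊤ :=
        ENNReal.mul_ne_top (ENNReal.inv_ne_top.2 ha_ne) h3.ne
      have h6 : (g z).toReal ≤ (1 - t)⁻¹ * (f z).toReal := by
        have := ENNReal.toReal_mono hafin h1
        rwa [ENNReal.toReal_mul, ENNReal.toReal_inv, hadef,
          ENNReal.toReal_ofReal (by linarith)] at this
      calc Real.log ((g z).toReal) ≤ Real.log ((1 - t)⁻¹ * (f z).toReal) :=
            Real.log_le_log hu h6
        _ = Real.log (1 - t)⁻¹ + Real.log ((f z).toReal) :=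
            Real.log_mul (inv_ne_zero (by linarith)) hv.ne'
        _ = C + Real.log ((f z).toReal) := by rw [hCinv, hCdef]
    -- integrability of log g
    set Lg := fun z => Real.log ((g z).toReal) with hLgdef
    set Lf := fun z => Real.log ((f z).toReal) with hLfdef
    have hLgm : Measurable Lg :=
      Real.measurable_log.comp (ENNReal.measurable_toReal.comp hgm)
    have hLfm : Measurable Lf :=
      Real.measurable_log.comp (ENNReal.measurable_toReal.comp hfm)
    have hLg_int : Integrable Lg η := by
      refine ⟨hLgm.aestronglyMeasurable, ?_⟩
      rw [hasFiniteIntegral_iff_norm]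
      have hsplit : ∀ᵐ z ∂η, ENNReal.ofReal ‖Lg z‖ ≤
          ENNReal.ofReal (|C| + |Lf z|) + ENNReal.ofReal (max (-(Lg z)) 0) := by
        filter_upwards [hlog] with z hz
        rw [Real.norm_eq_abs]
        rcases le_total (Lg z) 0 with h | h
        · refine le_add_left (ENNReal.ofReal_le_ofReal ?_)
          rw [abs_of_nonpos h, max_eq_left (by linarith)]
        · refine le_add_right (ENNReal.ofReal_le_ofReal ?_)
          rw [abs_of_nonneg h]
          calc Lg z ≤ C + Lf z := hz
            _ ≤ |C| + |Lf z| := add_le_add (le_abs_self C) (le_abs_self _)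
      calc (∫⁻ z, ENNReal.ofReal ‖Lg z‖ ∂η)
          ≤ ∫⁻ z, (ENNReal.ofReal (|C| + |Lf z|) + ENNReal.ofReal (max (-(Lg z)) 0)) ∂η :=
            lintegral_mono_ae hsplit
        _ = (∫⁻ z, ENNReal.ofReal (|C| + |Lf z|) ∂η)
            + ∫⁻ z, ENNReal.ofReal (max (-(Lg z)) 0) ∂η :=
            lintegral_add_left
              (ENNReal.measurable_ofReal.comp (measurable_const.add hLfm.abs)) _
        _ ≤ ((∫⁻ _, ENNReal.ofReal |C| ∂η) + ∫⁻ z, ENNReal.ofReal |Lf z| ∂η)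
            + κ' Set.univ := by
            refine add_le_add ?_ (lintegral_negpart_log_rnDeriv_le η κ' hac')
            rw [← lintegral_add_left measurable_const]
            exact lintegral_mono fun z => ENNReal.ofReal_add_le
        _ < ⊤ := by
            have h1 : (∫⁻ _, ENNReal.ofReal |C| ∂η) < ⊤ := by
              rw [lintegral_const, measure_univ, mul_one]; exact ENNReal.ofReal_lt_top
            have h2 : (∫⁻ z, ENNReal.ofReal |Lf z| ∂η) < ⊤ := by
              have := hint.2
              rw [hasFiniteIntegral_iff_norm] at this
              simpa [Real.norm_eq_abs] using this
            have h3 : κ' Set.univ < ⊤ := measure_lt_top κ' _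
            exact ENNReal.add_lt_top.2 ⟨ENNReal.add_lt_top.2 ⟨h1, h2⟩, h3⟩
    -- conclude
    have hkl' : KL η κ' = ENNReal.ofReal (∫ z, Lg z ∂η) := by
      rw [KL]; exact if_pos ⟨hac', hLg_int⟩
    have hkl : KL η κ = ENNReal.ofReal (∫ z, Lf z ∂η) := by
      rw [KL]; exact if_pos ⟨hac, hint⟩
    rw [hkl', hkl]
    have hintC : Integrable (fun z => C + Lf z) η := (integrable_const C).add hint
    have hmono : (∫ z, Lg z ∂η) ≤ ∫ z, (C + Lf z) ∂η :=
      integral_mono_ae hLg_int hintC hlog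
    have heval : (∫ z, (C + Lf z) ∂η) = C + ∫ z, Lf z ∂η := by
      rw [integral_add (integrable_const C) hint, integral_const, probReal_univ]
      simp
    calc ENNReal.ofReal (∫ z, Lg z ∂η) ≤ ENNReal.ofReal (C + ∫ z, Lf z ∂η) := by
          rw [← heval]; exact ENNReal.ofReal_le_ofReal hmono
      _ ≤ ENNReal.ofReal C + ENNReal.ofReal (∫ z, Lf z ∂η) := ENNReal.ofReal_add_le
      _ = ENNReal.ofReal (∫ z, Lf z ∂η) + e := by rw [add_comm, hedef]
  -- deduce the inequality on the infima
  refine ENNReal.le_of_forall_pos_le_add fun δ hδ hlt => ?_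
  have hy_lt : KLinf ε B η y < ⊤ := by
    by_contra h
    rw [not_lt, top_le_iff] at h
    rw [h, top_add] at hlt
    exact absurd hlt (lt_irrefl _)
  have hlt2 : KLinf ε B η y < KLinf ε B η y + δ :=
    ENNReal.lt_add_right hy_lt.ne (by exact_mod_cast hδ.ne')
  have hlt3 : (⨅ (κ : Measure ℝ) (_ : κ ∈ LBm ε B ∧ y ≤ mean κ), KL η κ)
      < KLinf ε B η y + δ := hlt2
  obtain ⟨κ, hκlt⟩ := iInf_lt_iff.1 hlt3
  by_cases hP : κ ∈ LBm ε B ∧ y ≤ mean κ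
  · rw [iInf_pos hP] at hκlt
    obtain ⟨κ', hκ'P, hκ'KL⟩ := key κ hP
    calc KLinf ε B η x ≤ KL η κ' := iInf₂_le κ' hκ'P
      _ ≤ KL η κ + e := hκ'KL
      _ ≤ (KLinf ε B η y + δ) + e := add_le_add_left hκlt.le e
      _ = (KLinf ε B η y + e) + δ := by ring
  · rw [iInf_neg hP] at hκlt
    exact absurd hκlt not_top_lt

/-- For fixed `ε > 0`, `B > 0` and probability measure `η`, the map `x ↦ KLinf(η, x)` is
continuous on the open interval `(−B^{1/(1+ε)}, B^{1/(1+ε)})`. -/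
theorem klinf_continuousOn_x (ε B : ℝ) (hε : 0 < ε) (hB : 0 < B)
    (η : Measure ℝ) (hη : IsProbabilityMeasure η) :
    ContinuousOn (fun x => KLinf ε B η x)
      (Set.Ioo (-(B ^ (1 / (1 + ε)))) (B ^ (1 / (1 + ε)))) := by
  set c : ℝ := B ^ (1 / (1 + ε)) with hcdef
  set s : Set ℝ := Set.Ioo (-c) c with hsdef
  set F : ℝ → ℝ≥0∞ := fun x => KLinf ε B η x with hFdef
  intro x₀ hx₀
  obtain ⟨hx₀l, hx₀r⟩ := hx₀
  rw [ContinuousWithinAt]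
  by_cases htop : F x₀ = ⊤
  · -- F is identically ⊤ on s
    have hall : ∀ z ∈ s, F z = ⊤ := by
      intro z hz
      rcases le_total z x₀ with h | h
      · by_contra hne
        have htop' : KLinf ε B η x₀ = ⊤ := htop
        have hb := klinf_le_add ε B hε hB η hη h hx₀r
        rw [htop', top_le_iff] at hb
        exact hne (by
          rcases ENNReal.add_eq_top.1 hb with h' | h'
          · exact h'
          · exact absurd h' ENNReal.ofReal_ne_top)
      · have htop' : KLinf ε B η x₀ = ⊤ := htop
        show KLinf ε B η z = ⊤
        exact top_le_iff.1 (htop' ▸ klinf_mono ε B η h)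
    have hev : F =ᶠ[nhdsWithin x₀ s] fun _ => (⊤ : ℝ≥0∞) :=
      eventually_nhdsWithin_of_forall hall
    rw [Filter.tendsto_congr' hev, htop]
    exact tendsto_const_nhds
  · rw [ENNReal.tendsto_nhds htop]
    intro ε' hε'
    set r : ℝ := (min ε' 1).toReal with hrdef
    have hmin_ne : min ε' 1 ≠ 0 := (lt_min hε' zero_lt_one).ne'
    have hmin_top : min ε' 1 ≠ ⊤ := ((min_le_right _ _).trans_lt (by norm_num)).ne
    have hr0 : 0 < r := ENNReal.toReal_pos hmin_ne hmin_top
    have hofr : ENNReal.ofReal r ≤ ε' := by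
      rw [hrdef, ENNReal.ofReal_toReal hmin_top]; exact min_le_left _ _
    have hcx₀ : 0 < c - x₀ := sub_pos.2 hx₀r
    have hexp : Real.exp (-r) < 1 := Real.exp_lt_one_iff.2 (by linarith)
    set δ : ℝ := (c - x₀) * (1 - Real.exp (-r)) with hδdef
    have hδ0 : 0 < δ := mul_pos hcx₀ (by linarith)
    have hball : ∀ᶠ z in nhdsWithin x₀ s, z ∈ Metric.ball x₀ δ :=
      eventually_nhdsWithin_of_eventually_nhds
        (Metric.ball_mem_nhds x₀ hδ0)
    filter_upwards [hball, eventually_mem_nhdsWithin] with z hzball hzs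
    obtain ⟨hzl, hzr⟩ := hzs
    have hzd : |z - x₀| < δ := by
      rw [Metric.mem_ball, Real.dist_eq] at hzball; exact hzball
    have habs := abs_lt.1 hzd
    have hexp_pos := Real.exp_pos (-r)
    have hexp_pos' := Real.exp_pos r
    have hee : Real.exp (-r) * Real.exp r = 1 := by
      rw [← Real.exp_add]; simp
    constructor
    · -- lower bound : F x₀ - ε' ≤ F z
      rcases le_total x₀ z with h | h
      · exact le_trans tsub_le_self (klinf_mono ε B η h)
      · -- z ≤ x₀
        have hb := klinf_le_add ε B hε hB η hη h hx₀r
        have hlog : Real.log ((c - z) / (c - x₀)) ≤ r := by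
          rw [Real.log_le_iff_le_exp (div_pos (by linarith) hcx₀)]
          rw [div_le_iff₀ hcx₀]
          -- c - z ≤ exp r * (c - x₀); using x₀ - z < δ and 1 - e^{-r} ≤ e^r - 1
          nlinarith [habs.1, habs.2]
        refine tsub_le_iff_right.2 (hb.trans ?_)
        exact add_le_add_right ((ENNReal.ofReal_le_ofReal hlog).trans hofr) _
    · -- upper bound : F z ≤ F x₀ + ε'
      rcases le_total z x₀ with h | h
      · exact (klinf_mono ε B η h).trans le_self_add
      · have hb := klinf_le_add ε B hε hB η hη h hzr
        have hlog : Real.log ((c - x₀) / (c - z)) ≤ r := by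
          rw [Real.log_le_iff_le_exp (div_pos hcx₀ (by linarith))]
          rw [div_le_iff₀ (by linarith : (0:ℝ) < c - z)]
          nlinarith [habs.1, habs.2]
        exact hb.trans (add_le_add_right ((ENNReal.ofReal_le_ofReal hlog).trans hofr) _)
end

section
/- For fixed ε > 0, x ∈ ℝ and η ∈ 𝓟(ℝ), the function B ↦ KLinf_B(η, x) is continuous on the open interval (|x|^{1+ε}, ∞). -/
open MeasureTheory
open scoped ENNReal Classical

open Filter


lemma integrable_id_of_moment {ε B : ℝ} (hε : 0 < ε) {κ : Measure ℝ}
    (hκ : IsProbabilityMeasure κ)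
    (hB : ∫⁻ y, ENNReal.ofReal (|y| ^ (1 + ε)) ∂κ ≤ ENNReal.ofReal B) :
    Integrable (fun y => y) κ := by
  refine ⟨measurable_id.aestronglyMeasurable, ?_⟩
  have hpt : ∀ y : ℝ, (‖y‖₊ : ℝ≥0∞) ≤ 1 + ENNReal.ofReal (|y| ^ (1 + ε)) := by
    intro y
    have h1 : (‖y‖₊ : ℝ≥0∞) = ENNReal.ofReal |y| := by
      rw [← enorm_eq_nnnorm, ← ofReal_norm, Real.norm_eq_abs]
    have h2 : |y| ≤ 1 + |y| ^ (1 + ε) := by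
      rcases le_total |y| 1 with h | h
      · have := Real.rpow_nonneg (abs_nonneg y) (1 + ε)
        linarith
      · have : |y| = |y| ^ (1 : ℝ) := (Real.rpow_one _).symm
        calc |y| = |y| ^ (1 : ℝ) := this
          _ ≤ |y| ^ (1 + ε) := Real.rpow_le_rpow_of_exponent_le h (by linarith)
          _ ≤ 1 + |y| ^ (1 + ε) := by linarith
    calc (‖y‖₊ : ℝ≥0∞) = ENNReal.ofReal |y| := h1
      _ ≤ ENNReal.ofReal (1 + |y| ^ (1 + ε)) := ENNReal.ofReal_le_ofReal h2
      _ = 1 + ENNReal.ofReal (|y| ^ (1 + ε)) := by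
          rw [ENNReal.ofReal_add (by norm_num) (Real.rpow_nonneg (abs_nonneg y) _)]
          simp
  show ∫⁻ y, (‖y‖₊ : ℝ≥0∞) ∂κ < ⊤
  calc ∫⁻ y, (‖y‖₊ : ℝ≥0∞) ∂κ ≤ ∫⁻ y, (1 + ENNReal.ofReal (|y| ^ (1 + ε))) ∂κ :=
        lintegral_mono hpt
    _ = ∫⁻ _, (1 : ℝ≥0∞) ∂κ + ∫⁻ y, ENNReal.ofReal (|y| ^ (1 + ε)) ∂κ :=
        lintegral_add_left measurable_const _
    _ ≤ 1 + ENNReal.ofReal B := by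
        rw [lintegral_one, measure_univ]
        exact add_le_add le_rfl hB
    _ < ⊤ := by
        exact ENNReal.add_lt_top.2 ⟨ENNReal.one_lt_top, ENNReal.ofReal_lt_top⟩

lemma mix_prob_s7 {κ : Measure ℝ} (hκ : IsProbabilityMeasure κ) (x lam : ℝ)
    (h0 : 0 ≤ lam) (h1 : lam ≤ 1) :
    IsProbabilityMeasure
      (ENNReal.ofReal (1 - lam) • κ + ENNReal.ofReal lam • Measure.dirac x) := by
  constructor
  rw [Measure.coe_add, Pi.add_apply, Measure.smul_apply, Measure.smul_apply,
    smul_eq_mul, smul_eq_mul, measure_univ, measure_univ, mul_one, mul_one,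
    ← ENNReal.ofReal_add (by linarith) h0]
  norm_num

lemma KL_mix_le {η κ : Measure ℝ} (hη : IsProbabilityMeasure η) (hκ : IsProbabilityMeasure κ)
    (x lam : ℝ) (h0 : 0 < lam) (h1 : lam < 1) :
    KL η (ENNReal.ofReal (1 - lam) • κ + ENNReal.ofReal lam • Measure.dirac x)
      ≤ KL η κ + ENNReal.ofReal (- Real.log (1 - lam)) := by
  set a := ENNReal.ofReal (1 - lam) with ha_def
  set b := ENNReal.ofReal lam with hb_def
  set ν := a • κ + b • Measure.dirac x with hν_def
  by_cases hKL : η ≪ κ ∧ Integrable (fun y => Real.log ((η.rnDeriv κ y).toReal)) η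
  swap
  · have hk : KL η κ = ⊤ := by rw [KL]; exact if_neg hKL
    simp [hk]
  obtain ⟨hηκ, hInt⟩ := hKL
  have ha_ne_top : a ≠ ⊤ := ENNReal.ofReal_ne_top
  have hb_ne_top : b ≠ ⊤ := ENNReal.ofReal_ne_top
  have ha_pos : 0 < a := ENNReal.ofReal_pos.2 (by linarith)
  have ha_toReal : a.toReal = 1 - lam := ENNReal.toReal_ofReal (by linarith)
  haveI : IsFiniteMeasure (a • κ) := by
    constructor
    rw [Measure.smul_apply, smul_eq_mul]
    exact ENNReal.mul_lt_top (Ne.lt_top ha_ne_top) (measure_lt_top κ _)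
  haveI : IsFiniteMeasure (b • Measure.dirac x) := by
    constructor
    rw [Measure.smul_apply, smul_eq_mul]
    exact ENNReal.mul_lt_top (Ne.lt_top hb_ne_top) (measure_lt_top _ _)
  haveI : IsFiniteMeasure ν := by rw [hν_def]; infer_instance
  -- κ ≪ ν
  have hκν : κ ≪ ν := by
    intro s hs
    rw [hν_def, Measure.coe_add, Pi.add_apply, Measure.smul_apply, smul_eq_mul] at hs
    have : a * κ s = 0 := le_antisymm (le_trans le_self_add hs.le) zero_le
    rcases mul_eq_zero.1 this with h | h
    · exact absurd h ha_pos.ne'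
    · exact h
  have hην : η ≪ ν := hηκ.trans hκν
  -- rnDeriv of ν w.r.t. κ : lower bound
  have hd_add : ν.rnDeriv κ =ᵐ[κ] (a • κ).rnDeriv κ + (b • Measure.dirac x).rnDeriv κ :=
    Measure.rnDeriv_add' _ _ _
  have hd_smul1 : (a • κ).rnDeriv κ =ᵐ[κ] a • κ.rnDeriv κ :=
    Measure.rnDeriv_smul_left_of_ne_top' _ _ ha_ne_top
  have hd_smul2 : (b • Measure.dirac x).rnDeriv κ =ᵐ[κ] b • (Measure.dirac x).rnDeriv κ :=
    Measure.rnDeriv_smul_left_of_ne_top' _ _ hb_ne_top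
  have hself : κ.rnDeriv κ =ᵐ[κ] fun _ => 1 := Measure.rnDeriv_self κ
  have hlow : ∀ᵐ y ∂κ, a ≤ ν.rnDeriv κ y := by
    filter_upwards [hd_add, hd_smul1, hself] with y hy1 hy2 hy3
    rw [hy1, Pi.add_apply, hy2, Pi.smul_apply, smul_eq_mul, hy3, mul_one]
    exact le_self_add
  -- dirac rnDeriv vanishes off {x}
  have hzero : ∀ᵐ y ∂κ, y ∈ ({x}ᶜ : Set ℝ) → (Measure.dirac x).rnDeriv κ y = 0 := by
    have h0 : ∫⁻ y in {x}ᶜ, (Measure.dirac x).rnDeriv κ y ∂κ = 0 := by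
      refine le_antisymm ((Measure.setLIntegral_rnDeriv_le _).trans ?_) zero_le
      rw [Measure.dirac_apply]
      simp
    exact (setLIntegral_eq_zero_iff (measurableSet_singleton x).compl
      (Measure.measurable_rnDeriv _ _)).1 h0
  -- upper bound
  obtain ⟨Cu, hCu_pos, hCu⟩ : ∃ C : ℝ, 0 < C ∧ ∀ᵐ y ∂κ, ν.rnDeriv κ y ≤ ENNReal.ofReal C := by
    by_cases hx : κ {x} = 0
    · refine ⟨1 - lam, by linarith, ?_⟩
      have hxae : ∀ᵐ y ∂κ, y ∈ ({x}ᶜ : Set ℝ) := by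
        rw [ae_iff]
        simpa using hx
      filter_upwards [hd_add, hd_smul1, hd_smul2, hself, hzero, hxae] with y hy1 hy2 hy3 hy4 hy5 hy6
      rw [hy1, Pi.add_apply, hy2, hy3, Pi.smul_apply, Pi.smul_apply, smul_eq_mul, smul_eq_mul,
        hy4, hy5 hy6, mul_one, mul_zero, add_zero]
    · have hrx : (Measure.dirac x).rnDeriv κ x ≤ (κ {x})⁻¹ := by
        have h1 : (Measure.dirac x).rnDeriv κ x * κ {x} ≤ 1 := by
          have h2 := Measure.setLIntegral_rnDeriv_le (μ := Measure.dirac x) (ν := κ) {x}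
          rwa [lintegral_singleton, Measure.dirac_apply_of_mem (Set.mem_singleton x)] at h2
        exact ENNReal.le_inv_iff_mul_le.2 h1
      have hinv_ne_top : (κ {x})⁻¹ ≠ ⊤ := by
        simp [hx]
      refine ⟨(1 - lam) + lam * ((κ {x})⁻¹).toReal, ?_, ?_⟩
      · have ht : (0:ℝ) ≤ ((κ {x})⁻¹).toReal := ENNReal.toReal_nonneg
        nlinarith
      have hCval : ENNReal.ofReal ((1 - lam) + lam * ((κ {x})⁻¹).toReal)
          = a + b * (κ {x})⁻¹ := by
        rw [ENNReal.ofReal_add (by linarith) (by positivity),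
          ENNReal.ofReal_mul h0.le, ENNReal.ofReal_toReal hinv_ne_top]
      rw [hCval]
      filter_upwards [hd_add, hd_smul1, hd_smul2, hself, hzero] with y hy1 hy2 hy3 hy4 hy5
      rw [hy1, Pi.add_apply, hy2, hy3, Pi.smul_apply, Pi.smul_apply, smul_eq_mul, smul_eq_mul,
        hy4, mul_one]
      by_cases hyx : y = x
      · subst hyx
        exact add_le_add le_rfl (mul_le_mul_right hrx _)
      · rw [hy5 hyx, mul_zero]
        exact add_le_add le_rfl zero_le
  -- transfer to η
  have hlowη : ∀ᵐ y ∂η, a ≤ ν.rnDeriv κ y := hηκ.ae_le hlow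
  have hupη : ∀ᵐ y ∂η, ν.rnDeriv κ y ≤ ENNReal.ofReal Cu := hηκ.ae_le hCu
  have hchainη : ∀ᵐ y ∂η, η.rnDeriv ν y * ν.rnDeriv κ y = η.rnDeriv κ y :=
    hηκ.ae_le (Measure.rnDeriv_mul_rnDeriv hην)
  have hposκ : ∀ᵐ y ∂η, 0 < η.rnDeriv κ y := Measure.rnDeriv_pos hηκ
  have hltκ : ∀ᵐ y ∂η, η.rnDeriv κ y < ⊤ := hηκ.ae_le (Measure.rnDeriv_lt_top η κ)
  set g : ℝ → ℝ := fun y => Real.log ((ν.rnDeriv κ y).toReal) with hg_def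
  have hgmeas : AEStronglyMeasurable g η :=
    (Real.measurable_log.comp
      (Measure.measurable_rnDeriv ν κ).ennreal_toReal).aestronglyMeasurable
  have hgbounds : ∀ᵐ y ∂η, Real.log (1 - lam) ≤ g y ∧ g y ≤ Real.log Cu := by
    filter_upwards [hlowη, hupη] with y hy1 hy2
    have hne : ν.rnDeriv κ y ≠ ⊤ := ne_top_of_le_ne_top ENNReal.ofReal_ne_top hy2
    have ht1 : 1 - lam ≤ (ν.rnDeriv κ y).toReal := by
      rw [← ha_toReal]
      exact ENNReal.toReal_mono hne hy1
    have ht2 : (ν.rnDeriv κ y).toReal ≤ Cu := by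
      have h5 := ENNReal.toReal_mono ENNReal.ofReal_ne_top hy2
      rwa [ENNReal.toReal_ofReal hCu_pos.le] at h5
    constructor
    · exact Real.log_le_log (by linarith) ht1
    · exact Real.log_le_log (by linarith) ht2
  have hg : Integrable g η := by
    refine Integrable.mono' (integrable_const (|Real.log (1 - lam)| + |Real.log Cu|)) hgmeas ?_
    filter_upwards [hgbounds] with y hy
    rw [Real.norm_eq_abs, abs_le]
    constructor
    · linarith [neg_abs_le (Real.log (1 - lam)), abs_nonneg (Real.log Cu), hy.1]
    · linarith [le_abs_self (Real.log Cu), abs_nonneg (Real.log (1 - lam)), hy.2]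
  have hkey : (fun y => Real.log ((η.rnDeriv ν y).toReal)) =ᵐ[η]
      fun y => Real.log ((η.rnDeriv κ y).toReal) - g y := by
    filter_upwards [hchainη, hposκ, hltκ, hlowη, hupη] with y hc hp hl hlo hup
    have hdne0 : ν.rnDeriv κ y ≠ 0 := (lt_of_lt_of_le ha_pos hlo).ne'
    have hdnetop : ν.rnDeriv κ y ≠ ⊤ := ne_top_of_le_ne_top ENNReal.ofReal_ne_top hup
    have hrνnetop : η.rnDeriv ν y ≠ ⊤ := by
      intro h
      rw [h, ENNReal.top_mul hdne0] at hc
      exact hl.ne hc.symm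
    have htr : (η.rnDeriv ν y).toReal * (ν.rnDeriv κ y).toReal = (η.rnDeriv κ y).toReal := by
      rw [← ENNReal.toReal_mul, hc]
    have hdt0 : (ν.rnDeriv κ y).toReal ≠ 0 := (ENNReal.toReal_pos hdne0 hdnetop).ne'
    have hrt0 : (η.rnDeriv κ y).toReal ≠ 0 := (ENNReal.toReal_pos hp.ne' hl.ne).ne'
    have hrνt0 : (η.rnDeriv ν y).toReal ≠ 0 := by
      intro h; rw [h, zero_mul] at htr; exact hrt0 htr.symm
    have hlogeq : Real.log ((η.rnDeriv κ y).toReal)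
        = Real.log ((η.rnDeriv ν y).toReal) + g y := by
      rw [← htr, Real.log_mul hrνt0 hdt0]
    rw [hlogeq]; ring
  have hIntν : Integrable (fun y => Real.log ((η.rnDeriv ν y).toReal)) η :=
    (hInt.sub hg).congr hkey.symm
  have hglb : ∀ᵐ y ∂η, Real.log (1 - lam) ≤ g y := hgbounds.mono fun y h => h.1
  have hI : ∫ y, Real.log ((η.rnDeriv ν y).toReal) ∂η
      ≤ ∫ y, Real.log ((η.rnDeriv κ y).toReal) ∂η + (- Real.log (1 - lam)) := by
    rw [integral_congr_ae hkey, integral_sub hInt hg]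
    have h2 : Real.log (1 - lam) ≤ ∫ y, g y ∂η := by
      have h3 := integral_mono_ae (integrable_const (Real.log (1 - lam))) hg hglb
      rwa [integral_const, probReal_univ, one_smul] at h3
    linarith
  simp only [KL]
  rw [if_pos ⟨hην, hIntν⟩, if_pos ⟨hηκ, hInt⟩]
  exact le_trans (ENNReal.ofReal_le_ofReal hI) ENNReal.ofReal_add_le
lemma klinf_anti (ε x : ℝ) (η : Measure ℝ) {B1 B2 : ℝ} (h : B1 ≤ B2) :
    KLinf ε B2 η x ≤ KLinf ε B1 η x := by
  simp only [KLinf]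
  refine le_iInf₂ fun κ hκ => iInf₂_le κ ?_
  exact ⟨⟨hκ.1.1, hκ.1.2.trans (ENNReal.ofReal_le_ofReal h)⟩, hκ.2⟩

lemma klinf_le_klinf_add (ε x : ℝ) (hε : 0 < ε) (η : Measure ℝ) (hη : IsProbabilityMeasure η)
    {B1 B2 : ℝ} (hm : |x| ^ (1 + ε) < B1) (h12 : B1 ≤ B2) :
    KLinf ε B1 η x ≤ KLinf ε B2 η x
      + ENNReal.ofReal (Real.log ((B2 - |x| ^ (1 + ε)) / (B1 - |x| ^ (1 + ε)))) := by
  set m := |x| ^ (1 + ε) with hm_def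
  have hm0 : 0 ≤ m := Real.rpow_nonneg (abs_nonneg x) _
  rcases eq_or_lt_of_le h12 with rfl | hlt
  · exact le_self_add
  set lam := (B2 - B1) / (B2 - m) with hlam_def
  have hm2 : m < B2 := lt_of_lt_of_le hm h12
  have hne : B2 - m ≠ 0 := by linarith
  have hlam0 : 0 < lam := div_pos (by linarith) (by linarith)
  have hlam1 : lam < 1 := (div_lt_one (by linarith)).2 (by linarith)
  have h1lam : 1 - lam = (B1 - m) / (B2 - m) := by
    field_simp [hlam_def]
    have h := div_mul_cancel₀ (B2 - B1) hne
    rw [← hlam_def] at h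
    linear_combination -h
  have hlog : Real.log ((B2 - m) / (B1 - m)) = - Real.log (1 - lam) := by
    have h2 : (B2 - m) / (B1 - m) = (1 - lam)⁻¹ := by rw [h1lam, inv_div]
    rw [h2, Real.log_inv]
  rw [hlog]
  simp only [KLinf, ENNReal.iInf_add]
  refine le_iInf fun κ => le_iInf fun hκ => ?_
  obtain ⟨⟨hκP, hκM⟩, hκmean⟩ := hκ
  haveI := hκP
  set κ' := ENNReal.ofReal (1 - lam) • κ + ENNReal.ofReal lam • Measure.dirac x with hκ'
  have hprob : IsProbabilityMeasure κ' := mix_prob_s7 hκP x lam hlam0.le hlam1.le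
  have hint : Integrable (fun y => y) κ := integrable_id_of_moment hε hκP hκM
  have hmom : ∫⁻ y, ENNReal.ofReal (|y| ^ (1 + ε)) ∂κ' ≤ ENNReal.ofReal B1 := by
    rw [hκ', lintegral_add_measure, lintegral_smul_measure, lintegral_smul_measure,
      lintegral_dirac]
    calc ENNReal.ofReal (1 - lam) * ∫⁻ y, ENNReal.ofReal (|y| ^ (1 + ε)) ∂κ
          + ENNReal.ofReal lam * ENNReal.ofReal (|x| ^ (1 + ε))
        ≤ ENNReal.ofReal (1 - lam) * ENNReal.ofReal B2
          + ENNReal.ofReal lam * ENNReal.ofReal m :=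
          add_le_add (mul_le_mul_right hκM _) le_rfl
      _ = ENNReal.ofReal ((1 - lam) * B2 + lam * m) := by
          rw [← ENNReal.ofReal_mul (by linarith), ← ENNReal.ofReal_mul hlam0.le,
            ← ENNReal.ofReal_add (by nlinarith) (by nlinarith)]
      _ = ENNReal.ofReal B1 := by
          congr 1
          field_simp [hlam_def]
          ring
          have h := div_mul_cancel₀ (B2 - B1) hne
          rw [← hlam_def] at h
          linear_combination -h
  have hmean : x ≤ mean κ' := by
    have hmean' : mean κ' = (1 - lam) * mean κ + lam * x := by
      have hi1 : Integrable (fun y => y) (ENNReal.ofReal (1 - lam) • κ) :=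
        hint.smul_measure ENNReal.ofReal_ne_top
      have hid : Integrable (fun y => y) (Measure.dirac x) := by
        refine (integrable_const x).congr ?_
        rw [Filter.EventuallyEq, MeasureTheory.ae_dirac_eq]
        exact eventually_pure.2 rfl
      have hi2 : Integrable (fun y => y) (ENNReal.ofReal lam • Measure.dirac x) :=
        hid.smul_measure ENNReal.ofReal_ne_top
      rw [mean, hκ', integral_add_measure hi1 hi2, integral_smul_measure,
        integral_smul_measure, integral_dirac, ENNReal.toReal_ofReal (by linarith),
        ENNReal.toReal_ofReal hlam0.le, smul_eq_mul, smul_eq_mul]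
      rfl
    rw [hmean']
    nlinarith [mul_le_mul_of_nonneg_left hκmean (by linarith : (0:ℝ) ≤ 1 - lam)]
  refine le_trans (iInf₂_le κ' ⟨⟨hprob, hmom⟩, hmean⟩) ?_
  exact KL_mix_le hη hκP x lam hlam0 hlam1

/-- For fixed `ε > 0`, `x ∈ ℝ` and probability measure `η`, the map `B ↦ KLinf_B(η, x)` is
continuous on the open interval `(|x|^{1+ε}, ∞)`. -/
theorem klinf_continuousOn_B (ε x : ℝ) (hε : 0 < ε)
    (η : Measure ℝ) (hη : IsProbabilityMeasure η) :
    ContinuousOn (fun B => KLinf ε B η x) (Set.Ioi (|x| ^ (1 + ε))) := by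
  set m := |x| ^ (1 + ε) with hm_def
  intro B hB
  have hBm : m < B := hB
  set f : ℝ → ℝ≥0∞ := fun B' => KLinf ε B' η x with hf
  set c : ℝ → ℝ≥0∞ :=
    fun B' => ENNReal.ofReal (Real.log ((max B' B - m) / (min B' B - m))) with hc
  have hbound : ∀ B' ∈ Set.Ioi m, f B - c B' ≤ f B' ∧ f B' ≤ f B + c B' := by
    intro B' hB'
    have hB'm : m < B' := hB'
    rcases le_total B' B with h | h
    · have h1 := klinf_le_klinf_add ε x hε η hη hB'm h
      have h2 := klinf_anti ε x η h
      rw [← hm_def] at h1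
      have hcv : c B' = ENNReal.ofReal (Real.log ((B - m) / (B' - m))) := by
        simp only [hc]
        rw [max_eq_right h, min_eq_left h]
      rw [hcv]
      exact ⟨tsub_le_iff_right.2 (h2.trans le_self_add), h1⟩
    · have h1 := klinf_le_klinf_add ε x hε η hη hBm h
      have h2 := klinf_anti ε x η h
      rw [← hm_def] at h1
      have hcv : c B' = ENNReal.ofReal (Real.log ((B' - m) / (B - m))) := by
        simp only [hc]
        rw [max_eq_left h, min_eq_right h]
      rw [hcv]
      exact ⟨tsub_le_iff_right.2 h1, h2.trans le_self_add⟩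
  have hgc : ContinuousAt (fun B' => (max B' B - m) / (min B' B - m)) B := by
    refine ContinuousAt.div
      (((continuous_id.max continuous_const).sub continuous_const).continuousAt)
      (((continuous_id.min continuous_const).sub continuous_const).continuousAt) ?_
    simp only [min_self]
    linarith
  have hBmne : B - m ≠ 0 := by linarith
  have hval : (max B B - m) / (min B B - m) = 1 := by
    rw [max_self, min_self, div_self hBmne]
  have hφ : ContinuousAt (fun B' => Real.log ((max B' B - m) / (min B' B - m))) B := by
    refine (Real.continuousAt_log ?_).comp hgc
    show (max B B - m) / (min B B - m) ≠ 0
    rw [hval]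
    norm_num
  have hc0 : Tendsto c (nhdsWithin B (Set.Ioi m)) (nhds 0) := by
    have h2 : ContinuousAt c B := ENNReal.continuous_ofReal.continuousAt.comp hφ
    have h3 := h2.continuousWithinAt (s := Set.Ioi m)
    have h4 : c B = 0 := by
      simp only [hc]
      rw [hval, Real.log_one, ENNReal.ofReal_zero]
    rw [ContinuousWithinAt, h4] at h3
    exact h3
  have hL : Tendsto (fun B' => f B - c B') (nhdsWithin B (Set.Ioi m)) (nhds (f B)) := by
    have h5 := ENNReal.Tendsto.sub
      (tendsto_const_nhds : Tendsto (fun _ : ℝ => f B) (nhdsWithin B (Set.Ioi m)) (nhds (f B)))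
      hc0 (Or.inr (by simp : (0:ℝ≥0∞) ≠ ⊤))
    simpa using h5
  have hU : Tendsto (fun B' => f B + c B') (nhdsWithin B (Set.Ioi m)) (nhds (f B)) := by
    have h5 := Filter.Tendsto.add
      (tendsto_const_nhds : Tendsto (fun _ : ℝ => f B) (nhdsWithin B (Set.Ioi m)) (nhds (f B)))
      hc0
    simpa using h5
  exact tendsto_of_tendsto_of_tendsto_of_le_of_le' hL hU
    (eventually_nhdsWithin_of_forall fun B' hB' => (hbound B' hB').1)
    (eventually_nhdsWithin_of_forall fun B' hB' => (hbound B' hB').2)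
end

section
/- Let Λ ⊆ ℝ^d be a compact convex set with positive Lebesgue measure and let q be the uniform probability distribution on Λ (normalized Lebesgue measure restricted to Λ). Let g_1, …, g_T : Λ → ℝ be functions such that each λ ↦ exp(g_t(λ)) is concave on Λ. Then sup_{λ ∈ Λ} Σ_{t=1}^T g_t(λ) ≤ log ∫ exp( Σ_{t=1}^T g_t(λ) ) dq(λ) + d·log(T + 1) + 1. -/
open MeasureTheory
open scoped ENNReal Classical

/-- A concave function on a compact convex set with a point in its interior is
bounded above. -/
lemma concaveOn_bddAbove_aux {d : ℕ} {Λ : Set (Fin d → ℝ)} (hΛc : IsCompact Λ)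
    (hΛconv : Convex ℝ Λ) {c : Fin d → ℝ} (hc : c ∈ interior Λ)
    {f : (Fin d → ℝ) → ℝ} (hf : ConcaveOn ℝ Λ f) :
    ∃ M : ℝ, ∀ x ∈ Λ, f x ≤ M := by
  set φ : (Fin d → ℝ) → (Fin d → ℝ) := fun x => (1/2 : ℝ) • x + (1/2 : ℝ) • c with hφ
  have hφcont : Continuous φ := by fun_prop
  set K : Set (Fin d → ℝ) := φ '' Λ with hK
  have hKc : IsCompact K := hΛc.image hφcont
  have hKint : K ⊆ interior Λ := by
    rintro _ ⟨x, hx, rfl⟩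
    exact hΛconv.combo_self_interior_mem_interior hx hc (by norm_num) (by norm_num)
      (by norm_num)
  have hcont : ContinuousOn f K := hf.continuousOn_interior.mono hKint
  obtain ⟨M, hM⟩ := hKc.exists_bound_of_continuousOn hcont
  refine ⟨2 * M + M, fun x hx => ?_⟩
  have hcΛ : c ∈ Λ := interior_subset hc
  have hmK : φ x ∈ K := ⟨x, hx, rfl⟩
  have hcK : c ∈ K := ⟨c, hcΛ, by rw [hφ]; simp; module⟩
  have h1 : (1/2 : ℝ) * f x + (1/2 : ℝ) * f c ≤ f (φ x) :=
    hf.2 hx hcΛ (by norm_num) (by norm_num) (by norm_num)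
  have h2 : f (φ x) ≤ M := le_trans (le_abs_self _) (by simpa [Real.norm_eq_abs] using hM _ hmK)
  have h3 : -M ≤ f c := by
    have := hM _ hcK
    rw [Real.norm_eq_abs] at this
    linarith [neg_abs_le (f c)]
  linarith

/-- A convex set of positive measure has nonempty interior. -/
lemma convex_interior_nonempty_aux {d : ℕ} {Λ : Set (Fin d → ℝ)}
    (hΛconv : Convex ℝ Λ) (hΛvol : 0 < volume Λ) : (interior Λ).Nonempty := by
  by_contra h
  rw [Set.not_nonempty_iff_eq_empty] at h
  have hsub : Λ ⊆ frontier Λ := by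
    rw [frontier, h, Set.diff_empty]
    exact subset_closure
  have : volume Λ = 0 :=
    le_antisymm ((measure_mono hsub).trans_eq (hΛconv.addHaar_frontier volume)) (zero_le)
  exact absurd this hΛvol.ne'

/-- Mixture bound for exp-concave functions: if `Λ ⊆ ℝ^d` is compact convex with positive
Lebesgue measure, `q` is the uniform distribution on `Λ`, and each `g_t` is exp-concave on
`Λ`, then `sup_{λ ∈ Λ} Σ_t g_t(λ) ≤ log ∫ exp(Σ_t g_t) dq + d log(T+1) + 1`. -/
theorem expConcave_mixture_bound (d T : ℕ)
    (Λ : Set (Fin d → ℝ)) (hΛc : IsCompact Λ) (hΛconv : Convex ℝ Λ)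
    (hΛvol : 0 < volume Λ)
    (g : ℕ → (Fin d → ℝ) → ℝ)
    (hg : ∀ t ∈ Finset.range T, ConcaveOn ℝ Λ (fun p => Real.exp (g t p))) :
    ∀ p ∈ Λ, ∑ t ∈ Finset.range T, g t p ≤
      Real.log (∫ q, Real.exp (∑ t ∈ Finset.range T, g t q)
          ∂((volume Λ)⁻¹ • volume.restrict Λ))
        + d * Real.log ((T : ℝ) + 1) + 1 := by
  intro p hp
  obtain ⟨c, hc⟩ := convex_interior_nonempty_aux hΛconv hΛvol
  have hΛm : MeasurableSet Λ := hΛc.measurableSet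
  have hvol_top : volume Λ ≠ ⊤ := hΛc.measure_lt_top.ne
  have hvol0 : volume Λ ≠ 0 := hΛvol.ne'
  set q : Measure (Fin d → ℝ) := (volume Λ)⁻¹ • volume.restrict Λ with hq
  have hqprob : IsProbabilityMeasure q := by
    constructor
    rw [hq, Measure.smul_apply, Measure.restrict_apply_univ, smul_eq_mul,
      ENNReal.inv_mul_cancel hvol0 hvol_top]
  set F : (Fin d → ℝ) → ℝ := fun x => ∑ t ∈ Finset.range T, g t x with hF
  set f : (Fin d → ℝ) → ℝ := fun x => Real.exp (F x) with hf
  have hT1 : (0:ℝ) < (T : ℝ) + 1 := by positivity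
  set α : ℝ := ((T : ℝ) + 1)⁻¹ with hα
  have hα0 : 0 < α := by positivity
  have hα1 : α ≤ 1 := by
    rw [hα]
    rw [inv_le_one_iff₀]
    right; linarith
  have h1α : 0 ≤ 1 - α := by linarith
  -- the shrunk set
  set S : Set (Fin d → ℝ) := AffineMap.homothety p α '' Λ with hS
  have hhom : ∀ x, AffineMap.homothety p α x = (1 - α) • p + α • x := by
    intro x
    rw [AffineMap.homothety_apply]
    simp only [vsub_eq_sub, vadd_eq_add]
    module
  have hSsub : S ⊆ Λ := by
    rintro _ ⟨x, hx, rfl⟩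
    rw [hhom]
    exact hΛconv hp hx h1α hα0.le (by ring)
  have hScomp : IsCompact S := by
    have : Continuous (AffineMap.homothety p α) := by
      have : (AffineMap.homothety p α : (Fin d → ℝ) → (Fin d → ℝ)) =
          fun x => (1 - α) • p + α • x := funext hhom
      rw [this]; fun_prop
    exact hΛc.image this
  have hSmeas : MeasurableSet S := hScomp.measurableSet
  -- product form of f
  have hprod : ∀ z, f z = ∏ t ∈ Finset.range T, Real.exp (g t z) := fun z =>
    Real.exp_sum _ _
  -- key pointwise lower bound on S
  have hkey : ∀ y ∈ S, (1 - α) ^ T * Real.exp (F p) ≤ f y := by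
    rintro _ ⟨x, hx, rfl⟩
    rw [hhom, hprod]
    have : (1 - α) ^ T * Real.exp (F p)
        = ∏ t ∈ Finset.range T, ((1 - α) * Real.exp (g t p)) := by
      rw [Finset.prod_mul_distrib, Finset.prod_const, Finset.card_range, ← Real.exp_sum]
    rw [this]
    refine Finset.prod_le_prod (fun t _ => by positivity) (fun t ht => ?_)
    have hcon := (hg t ht).2 hp hx h1α hα0.le (by ring)
    simp only [smul_eq_mul] at hcon
    nlinarith [Real.exp_pos (g t x)]
  -- measure of S
  have hμS : volume S = ENNReal.ofReal (α ^ d) * volume Λ := by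
    rw [hS, Measure.addHaar_image_homothety]
    congr 2
    rw [abs_of_nonneg (by positivity), Module.finrank_fin_fun]
  have hqS : q S = ENNReal.ofReal (α ^ d) := by
    rw [hq, Measure.smul_apply, Measure.restrict_apply hSmeas,
      Set.inter_eq_left.mpr hSsub, hμS, smul_eq_mul, mul_comm (ENNReal.ofReal _),
      ← mul_assoc, ENNReal.inv_mul_cancel hvol0 hvol_top, one_mul]
  -- continuity / measurability of f
  have hcont : ContinuousOn f (interior Λ) := by
    have : ContinuousOn (fun z => ∏ t ∈ Finset.range T, Real.exp (g t z)) (interior Λ) :=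
      continuousOn_finset_prod _ (fun t ht => (hg t ht).continuousOn_interior)
    exact this.congr (fun z _ => hprod z)
  have hrestr : volume.restrict Λ = volume.restrict (interior Λ) := by
    refine Measure.restrict_congr_set ?_
    rw [MeasureTheory.ae_eq_set]
    constructor
    · refine measure_mono_null (fun x hx => ?_) (hΛconv.addHaar_frontier volume)
      exact ⟨subset_closure hx.1, hx.2⟩
    · rw [Set.diff_eq_empty.mpr interior_subset]
      exact measure_empty
  have hfae : AEStronglyMeasurable f (volume.restrict Λ) := by
    rw [hrestr]
    exact hcont.aestronglyMeasurable measurableSet_interior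
  -- upper bound on f over Λ
  have hex : ∀ t : ℕ, ∃ M : ℝ, ∀ x ∈ Λ, t ∈ Finset.range T → Real.exp (g t x) ≤ M := by
    intro t
    by_cases ht : t ∈ Finset.range T
    · obtain ⟨M, hM⟩ := concaveOn_bddAbove_aux hΛc hΛconv hc (hg t ht)
      exact ⟨M, fun x hx _ => hM x hx⟩
    · exact ⟨0, fun x _ ht' => absurd ht' ht⟩
  choose M hM using hex
  have hfbd : ∀ x ∈ Λ, f x ≤ ∏ t ∈ Finset.range T, M t := by
    intro x hx
    rw [hprod]
    exact Finset.prod_le_prod (fun t _ => (Real.exp_pos _).le)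
      (fun t ht => hM t x hx ht)
  -- integrability
  have hfint : Integrable f (volume.restrict Λ) := by
    refine Integrable.mono' (g := fun _ => ∏ t ∈ Finset.range T, M t)
      (integrableOn_const hΛc.measure_lt_top.ne) hfae ?_
    rw [ae_restrict_iff' hΛm]
    filter_upwards with x hx
    rw [Real.norm_eq_abs, abs_of_pos (Real.exp_pos _)]
    exact hfbd x hx
  have hfintq : Integrable f q := by
    rw [hq]
    exact hfint.smul_measure (ENNReal.inv_ne_top.mpr hvol0)
  -- lower bound on the integral
  have hind : Integrable (S.indicator fun _ => (1 - α) ^ T * Real.exp (F p)) q :=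
    (integrable_const _).indicator hSmeas
  have hle : ∀ x, S.indicator (fun _ => (1 - α) ^ T * Real.exp (F p)) x ≤ f x := by
    intro x
    by_cases hx : x ∈ S
    · rw [Set.indicator_of_mem hx]; exact hkey x hx
    · rw [Set.indicator_of_notMem hx]; exact (Real.exp_pos _).le
  have hpow : 0 < (1 - α) ^ T := by
    rcases Nat.eq_zero_or_pos T with h | h
    · simp [h]
    · apply pow_pos
      have hT0 : (1:ℝ) ≤ (T : ℝ) := by exact_mod_cast h
      have : α < 1 := by
        rw [hα]
        rw [inv_lt_one_iff₀]
        right; linarith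
      linarith
  have hint : ((1 - α) ^ T * Real.exp (F p)) * α ^ d ≤ ∫ x, f x ∂q := by
    have h := integral_mono hind hfintq hle
    rwa [integral_indicator_const _ hSmeas, measureReal_def, hqS,
      ENNReal.toReal_ofReal (by positivity), smul_eq_mul, mul_comm] at h
  have hLpos : 0 < ((1 - α) ^ T * Real.exp (F p)) * α ^ d :=
    mul_pos (mul_pos hpow (Real.exp_pos _)) (by positivity)
  have hlog := Real.log_le_log hLpos hint
  rw [Real.log_mul (mul_pos hpow (Real.exp_pos _)).ne' (by positivity),
    Real.log_mul hpow.ne' (Real.exp_pos _).ne', Real.log_exp, Real.log_pow,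
    Real.log_pow] at hlog
  have hlogα : Real.log α = -Real.log ((T : ℝ) + 1) := by rw [hα, Real.log_inv]
  have hfinal : -((T : ℝ) * Real.log (1 - α)) ≤ 1 := by
    rcases Nat.eq_zero_or_pos T with h | h
    · simp [h]
    · have hT0 : (0:ℝ) < (T : ℝ) := by exact_mod_cast h
      have h1αeq : 1 - α = (T : ℝ) / ((T : ℝ) + 1) := by
        rw [hα]; field_simp; ring
      rw [h1αeq, Real.log_div hT0.ne' hT1.ne']
      have hstep : Real.log ((T : ℝ) + 1) - Real.log (T : ℝ) ≤ 1 / (T : ℝ) := by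
        rw [← Real.log_div hT1.ne' hT0.ne']
        have := Real.log_le_sub_one_of_pos (x := ((T : ℝ) + 1) / (T : ℝ)) (by positivity)
        have heq : ((T : ℝ) + 1) / (T : ℝ) - 1 = 1 / (T : ℝ) := by field_simp; ring
        linarith
      have : (T : ℝ) * (Real.log ((T : ℝ) + 1) - Real.log (T : ℝ)) ≤ 1 := by
        calc (T : ℝ) * (Real.log ((T : ℝ) + 1) - Real.log (T : ℝ))
            ≤ (T : ℝ) * (1 / (T : ℝ)) := by
              exact mul_le_mul_of_nonneg_left hstep hT0.le
          _ = 1 := by field_simp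
      linarith
  rw [hlogα] at hlog
  linarith
end

section
/- Let X be a real random variable whose cumulant generating function Λ(θ) := log E[e^{θX}] is finite for all θ ∈ [−1, 1], and suppose m := E[X] > 0. Let I(x) := sup_{θ ∈ ℝ} ( θ·x − Λ(θ) ) be the Legendre–Fenchel transform of Λ. Then there exist δ0 > 0 and c > 0 such that for all δ ∈ [0, δ0], I(m − δ) ≥ c·δ². -/
open MeasureTheory
open scoped ENNReal Classical

/-- The cumulant generating function `θ ↦ log E[e^{θX}]`, with value `+∞` when `e^{θX}` is
not integrable. -/
noncomputable def cgfE {Ω : Type*} [MeasurableSpace Ω] (X : Ω → ℝ) (P : Measure Ω)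
    (θ : ℝ) : EReal :=
  if Integrable (fun ω => Real.exp (θ * X ω)) P
  then ((Real.log (∫ ω, Real.exp (θ * X ω) ∂P) : ℝ) : EReal)
  else ⊤

/-- The Legendre–Fenchel transform `I(x) = sup_θ (θx − Λ(θ))` of the cumulant generating
function. -/
noncomputable def rateFn {Ω : Type*} [MeasurableSpace Ω] (X : Ω → ℝ) (P : Measure Ω)
    (x : ℝ) : EReal :=
  ⨆ θ : ℝ, ((θ * x : ℝ) : EReal) - cgfE X P θ

lemma aux_exp_le (t : ℝ) : Real.exp t ≤ 1 + t + t^2 * Real.exp |t| := by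
  have hm : Real.exp t * Real.exp (-t) = 1 := by rw [← Real.exp_add]; simp
  have h0 : (-t) + 1 ≤ Real.exp (-t) := Real.add_one_le_exp _
  have h1 : t + 1 ≤ Real.exp t := Real.add_one_le_exp _
  rcases le_or_gt 0 t with ht | ht
  · rw [abs_of_nonneg ht]
    nlinarith [Real.exp_pos t, Real.exp_pos (-t), mul_nonneg ht ht,
      mul_le_mul_of_nonneg_left h0 (Real.exp_pos t).le]
  · rw [abs_of_neg ht]
    nlinarith [Real.exp_pos t, Real.exp_pos (-t),
      mul_le_mul_of_nonneg_left h0 (Real.exp_pos t).le,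
      mul_le_mul_of_nonneg_left h0 (mul_nonneg (mul_self_nonneg t) (Real.exp_pos (-t)).le)]

lemma aux_sq_le (x : ℝ) : x^2 ≤ 16 * Real.exp (|x|/2) := by
  have h0 : |x|/4 + 1 ≤ Real.exp (|x|/4) := Real.add_one_le_exp _
  have h2 : Real.exp (|x|/4) * Real.exp (|x|/4) = Real.exp (|x|/2) := by
    rw [← Real.exp_add]; ring_nf
  nlinarith [abs_nonneg x, Real.exp_pos (|x|/4), sq_abs x, sq_nonneg (|x|/4 + 1)]

lemma aux_abs_le (x : ℝ) : |x| ≤ Real.exp x + Real.exp (-x) := by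
  rcases le_or_gt 0 x with h | h
  · rw [abs_of_nonneg h]
    nlinarith [Real.add_one_le_exp x, Real.exp_pos (-x)]
  · rw [abs_of_neg h]
    nlinarith [Real.add_one_le_exp (-x), Real.exp_pos x]

lemma aux_exp_abs_le (x : ℝ) : Real.exp |x| ≤ Real.exp x + Real.exp (-x) := by
  rcases abs_cases x with ⟨h, _⟩ | ⟨h, _⟩ <;> rw [h] <;>
    [linarith [Real.exp_pos (-x)]; linarith [Real.exp_pos x]]

/-- If the cumulant generating function of `X` is finite on `[−1, 1]` and `m := E[X] > 0`,
then there exist `δ0 > 0` and `c > 0` such that `I(m − δ) ≥ c·δ²` for all `δ ∈ [0, δ0]`. -/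
theorem rateFn_quadratic_lower_bound {Ω : Type*} [MeasurableSpace Ω] (P : Measure Ω)
    [IsProbabilityMeasure P] (X : Ω → ℝ) (hX : Measurable X)
    (hmgf : ∀ θ ∈ Set.Icc (-1 : ℝ) 1, Integrable (fun ω => Real.exp (θ * X ω)) P)
    (hm : 0 < ∫ ω, X ω ∂P) :
    ∃ δ0 : ℝ, 0 < δ0 ∧ ∃ c : ℝ, 0 < c ∧ ∀ δ ∈ Set.Icc (0 : ℝ) δ0,
      ((c * δ ^ 2 : ℝ) : EReal) ≤ rateFn X P ((∫ ω, X ω ∂P) - δ) := by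
  set m := ∫ ω, X ω ∂P with hmdef
  have h1 : Integrable (fun ω => Real.exp (1 * X ω)) P := hmgf 1 ⟨by norm_num, le_refl 1⟩
  have hn1 : Integrable (fun ω => Real.exp ((-1) * X ω)) P := hmgf (-1) ⟨le_refl _, by norm_num⟩
  have hsum : Integrable (fun ω => Real.exp (X ω) + Real.exp (-X ω)) P := by
    have := h1.add hn1
    simpa [Pi.add_def] using this
  have hXint : Integrable X P := by
    refine hsum.mono' hX.aestronglyMeasurable (ae_of_all _ fun ω => ?_)
    simpa using aux_abs_le (X ω)
  set g : Ω → ℝ := fun ω => (X ω)^2 * Real.exp (|X ω|/2) with hgdef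
  have hgmeas : Measurable g := by
    fun_prop
  have hgnn : ∀ ω, 0 ≤ g ω := fun ω =>
    mul_nonneg (sq_nonneg _) (Real.exp_pos _).le
  have hgint : Integrable g P := by
    refine (hsum.const_mul 16).mono' hgmeas.aestronglyMeasurable (ae_of_all _ fun ω => ?_)
    rw [Real.norm_eq_abs, abs_of_nonneg (hgnn ω)]
    show (X ω)^2 * Real.exp (|X ω|/2) ≤ _
    have h2 : Real.exp (|X ω|/2) * Real.exp (|X ω|/2) = Real.exp |X ω| := by
      rw [← Real.exp_add]; ring_nf
    have h3 := aux_sq_le (X ω)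
    have h4 := aux_exp_abs_le (X ω)
    have h5 := Real.exp_pos (|X ω|/2)
    nlinarith
  set G := ∫ ω, g ω ∂P with hGdef
  have hGnn : 0 ≤ G := integral_nonneg hgnn
  set K := G + 1 with hKdef
  have hK : 0 < K := by linarith
  refine ⟨K, hK, 1/(4*K), by positivity, fun δ hδ => ?_⟩
  obtain ⟨hδ0, hδK⟩ := hδ
  set θ : ℝ := -δ/(2*K) with hθdef
  have hθeq : θ = -(δ/(2*K)) := by rw [hθdef]; ring
  have hfrac0 : 0 ≤ δ/(2*K) := by positivity
  have hfrac : δ/(2*K) ≤ 1/2 := by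
    rw [div_le_iff₀ (by linarith : (0:ℝ) < 2*K)]; linarith
  have hθnp : θ ≤ 0 := by rw [hθeq]; linarith
  have hθhalf : -θ ≤ 1/2 := by rw [hθeq]; linarith
  have hθmem : θ ∈ Set.Icc (-1 : ℝ) 1 := ⟨by rw [hθeq]; linarith, by rw [hθeq]; linarith⟩
  have hθint := hmgf θ hθmem
  -- pointwise bound
  have hpt : ∀ ω, Real.exp (θ * X ω) ≤ 1 + θ * X ω + θ^2 * g ω := by
    intro ω
    show Real.exp (θ * X ω) ≤ 1 + θ * X ω + θ^2 * ((X ω)^2 * Real.exp (|X ω|/2))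
    have h1 := aux_exp_le (θ * X ω)
    have h2 : Real.exp |θ * X ω| ≤ Real.exp (|X ω|/2) := by
      apply Real.exp_le_exp.2
      rw [abs_mul]
      have : |θ| ≤ 1/2 := by rw [abs_of_nonpos hθnp]; exact hθhalf
      nlinarith [abs_nonneg (X ω), abs_nonneg θ]
    have h3 : (θ * X ω)^2 = θ^2 * (X ω)^2 := by ring
    nlinarith [sq_nonneg (θ * X ω), sq_nonneg θ, sq_nonneg (X ω),
      mul_le_mul_of_nonneg_left h2 (mul_nonneg (sq_nonneg θ) (sq_nonneg (X ω)))]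
  have hIc : Integrable (fun ω => θ * X ω) P := hXint.const_mul θ
  have hIa : Integrable (fun ω => 1 + θ * X ω) P := (integrable_const 1).add hIc
  have hIb : Integrable (fun ω => θ^2 * g ω) P := hgint.const_mul _
  have hInt2 : Integrable (fun ω => 1 + θ * X ω + θ^2 * g ω) P := hIa.add hIb
  have hE : ∫ ω, Real.exp (θ * X ω) ∂P ≤ 1 + θ * m + θ^2 * G := by
    calc ∫ ω, Real.exp (θ * X ω) ∂P ≤ ∫ ω, (1 + θ * X ω + θ^2 * g ω) ∂P :=
          integral_mono hθint hInt2 hpt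
      _ = 1 + θ * m + θ^2 * G := by
          rw [integral_add hIa hIb, integral_add (integrable_const (1:ℝ)) hIc,
            integral_const, integral_const_mul, integral_const_mul]
          simp [hmdef, hGdef]
  have hpos : 0 < ∫ ω, Real.exp (θ * X ω) ∂P := integral_exp_pos hθint
  have hΛ : Real.log (∫ ω, Real.exp (θ * X ω) ∂P) ≤ θ * m + K * θ^2 := by
    have hlog := Real.log_le_sub_one_of_pos hpos
    nlinarith [sq_nonneg θ]
  have hreal : 1/(4*K) * δ^2 ≤ θ * (m - δ) - Real.log (∫ ω, Real.exp (θ * X ω) ∂P) := by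
    have key : -θ*δ - K*θ^2 = 1/(4*K) * δ^2 := by
      rw [hθdef]; field_simp; ring
    nlinarith [hΛ]
  have hcgf : cgfE X P θ = ((Real.log (∫ ω, Real.exp (θ * X ω) ∂P) : ℝ) : EReal) :=
    if_pos hθint
  have hsup : (((θ * (m - δ) : ℝ)) : EReal) - cgfE X P θ ≤ rateFn X P (m - δ) :=
    le_iSup (fun θ' => (((θ' * (m - δ) : ℝ)) : EReal) - cgfE X P θ') θ
  rw [hcgf, ← EReal.coe_sub] at hsup
  exact le_trans (EReal.coe_le_coe_iff.2 hreal) hsup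
end

section
/- Let η̃ > 0, a > 0, M ∈ ℕ, and let (n_k)_{k≥1} be real numbers with n_k ≥ (1+η̃)^{k−2} for every k. Then Σ_{k=1}^{M} (1+η̃)^{k−1} · exp(−n_k·a) ≤ ((1+η̃)/a) · ( exp(−a/(1+η̃)) / log(1+η̃) + 1/e ). -/
open Real Finset

/-- φ(t) = t e^{-t} is monotone on [0,1]. -/
lemma phi_mono_aux (t s : ℝ) (ht : 0 ≤ t) (hts : t ≤ s) (hs : s ≤ 1) :
    t * Real.exp (-t) ≤ s * Real.exp (-s) := by
  have key : t * Real.exp (s - t) ≤ s := by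
    by_cases h0 : 1 + t - s ≤ 0
    · have ht0 : t = 0 := le_antisymm (by linarith) ht
      subst ht0
      simp
      linarith
    · push_neg at h0
      have he : 1 + (t - s) ≤ Real.exp (t - s) := by
        linarith [Real.add_one_le_exp (t - s)]
      have hprod : Real.exp (s - t) * Real.exp (t - s) = 1 := by
        rw [← Real.exp_add]; simp
      have hp1 : 0 < Real.exp (s - t) := Real.exp_pos _
      have hp2 : 0 < Real.exp (t - s) := Real.exp_pos _
      nlinarith [mul_pos hp1 hp2, sq_nonneg (s - t)]
  have h2 : t * Real.exp (s - t) * Real.exp (-s) ≤ s * Real.exp (-s) :=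
    mul_le_mul_of_nonneg_right key (Real.exp_pos _).le
  have h3 : Real.exp (s - t) * Real.exp (-s) = Real.exp (-t) := by
    rw [← Real.exp_add]; congr 1; ring
  rw [mul_assoc, h3] at h2
  exact h2

/-- φ(t) = t e^{-t} is antitone on [1,∞). -/
lemma phi_anti_aux (t s : ℝ) (ht : 1 ≤ t) (hts : t ≤ s) :
    s * Real.exp (-s) ≤ t * Real.exp (-t) := by
  have key : s ≤ t * Real.exp (s - t) := by
    have he : 1 + (s - t) ≤ Real.exp (s - t) := by
      linarith [Real.add_one_le_exp (s - t)]
    nlinarith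
  have h2 : s * Real.exp (-s) ≤ t * Real.exp (s - t) * Real.exp (-s) :=
    mul_le_mul_of_nonneg_right key (Real.exp_pos _).le
  have h3 : Real.exp (s - t) * Real.exp (-s) = Real.exp (-t) := by
    rw [← Real.exp_add]; congr 1; ring
  rw [mul_assoc, h3] at h2
  exact h2

/-- φ(t) = t e^{-t} ≤ 1/e for t ≥ 0. -/
lemma phi_le_aux (t : ℝ) : t * Real.exp (-t) ≤ 1 / Real.exp 1 := by
  have he : t ≤ Real.exp (t - 1) := by linarith [Real.add_one_le_exp (t - 1)]
  calc t * Real.exp (-t) ≤ Real.exp (t - 1) * Real.exp (-t) :=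
        mul_le_mul_of_nonneg_right he (Real.exp_pos _).le
    _ = 1 / Real.exp 1 := by
        rw [← Real.exp_add, show t - 1 + -t = -1 by ring, Real.exp_neg, one_div]

noncomputable def gfun (L a x : ℝ) : ℝ :=
  Real.exp ((x - 1) * L) * Real.exp (-(Real.exp ((x - 2) * L) * a))

noncomputable def Hfun (L a x : ℝ) : ℝ :=
  -(Real.exp L / (a * L)) * Real.exp (-(Real.exp ((x - 2) * L) * a))

lemma gfun_nonneg (L a x : ℝ) : 0 ≤ gfun L a x := by
  unfold gfun; positivity

lemma gfun_eq (L a x : ℝ) (ha : a ≠ 0) :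
    gfun L a x = (Real.exp L / a) *
      ((a * Real.exp ((x - 2) * L)) * Real.exp (-(a * Real.exp ((x - 2) * L)))) := by
  unfold gfun
  rw [show (x - 1) * L = L + (x - 2) * L by ring, Real.exp_add,
    show Real.exp ((x - 2) * L) * a = a * Real.exp ((x - 2) * L) from mul_comm _ _]
  field_simp

lemma gfun_mono (L a x y : ℝ) (ha : 0 < a)
    (hxy : a * Real.exp ((x - 2) * L) ≤ a * Real.exp ((y - 2) * L))
    (hy : a * Real.exp ((y - 2) * L) ≤ 1) : gfun L a x ≤ gfun L a y := by
  rw [gfun_eq L a x ha.ne', gfun_eq L a y ha.ne']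
  exact mul_le_mul_of_nonneg_left
    (phi_mono_aux _ _ (by positivity) hxy hy) (by positivity)

lemma gfun_anti (L a x y : ℝ) (ha : 0 < a)
    (hx : 1 ≤ a * Real.exp ((x - 2) * L))
    (hxy : a * Real.exp ((x - 2) * L) ≤ a * Real.exp ((y - 2) * L)) :
    gfun L a y ≤ gfun L a x := by
  rw [gfun_eq L a x ha.ne', gfun_eq L a y ha.ne']
  exact mul_le_mul_of_nonneg_left (phi_anti_aux _ _ hx hxy) (by positivity)

lemma gfun_le (L a x : ℝ) (ha : 0 < a) :
    gfun L a x ≤ Real.exp L / a * (1 / Real.exp 1) := by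
  rw [gfun_eq L a x ha.ne']
  exact mul_le_mul_of_nonneg_left (phi_le_aux _) (by positivity)

lemma hasDerivAt_Hfun (L a : ℝ) (hL : L ≠ 0) (ha : a ≠ 0) (x : ℝ) :
    HasDerivAt (Hfun L a) (gfun L a x) x := by
  have h1 : HasDerivAt (fun x : ℝ => (x - 2) * L) L x := by
    simpa using ((hasDerivAt_id x).sub_const 2).mul_const L
  have h2 : HasDerivAt (fun x : ℝ => Real.exp ((x - 2) * L))
      (Real.exp ((x - 2) * L) * L) x := h1.exp
  have h3 : HasDerivAt (fun x : ℝ => -(Real.exp ((x - 2) * L) * a))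
      (-(Real.exp ((x - 2) * L) * L * a)) x := (h2.mul_const a).neg
  have h4 : HasDerivAt (fun x : ℝ => Real.exp (-(Real.exp ((x - 2) * L) * a)))
      (Real.exp (-(Real.exp ((x - 2) * L) * a)) * (-(Real.exp ((x - 2) * L) * L * a))) x := h3.exp
  have h5 : HasDerivAt (Hfun L a) (-(Real.exp L / (a * L)) *
      (Real.exp (-(Real.exp ((x - 2) * L) * a)) * (-(Real.exp ((x - 2) * L) * L * a)))) x :=
    h4.const_mul (-(Real.exp L / (a * L)))
  convert h5 using 1
  unfold gfun
  rw [show (x - 1) * L = L + (x - 2) * L by ring, Real.exp_add]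
  field_simp

lemma gfun_continuous (L a : ℝ) : Continuous (gfun L a) := by
  unfold gfun
  continuity

/-- If v ≤ g on [l, l+1] then v ≤ H(l+1) - H(l). -/
lemma step_le (L a : ℝ) (hL : L ≠ 0) (ha : a ≠ 0) (l v : ℝ)
    (h : ∀ x ∈ Set.Icc l (l + 1), v ≤ gfun L a x) :
    v ≤ Hfun L a (l + 1) - Hfun L a l := by
  have hcont := gfun_continuous L a
  have heq : ∫ x in l..(l + 1), gfun L a x = Hfun L a (l + 1) - Hfun L a l :=
    intervalIntegral.integral_eq_sub_of_hasDerivAt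
      (fun x _ => hasDerivAt_Hfun L a hL ha x)
      (hcont.intervalIntegrable _ _)
  rw [← heq]
  calc v = ∫ _x in l..(l + 1), v := by
        rw [intervalIntegral.integral_const]; simp
    _ ≤ ∫ x in l..(l + 1), gfun L a x :=
        intervalIntegral.integral_mono_on (by linarith)
          intervalIntegrable_const (hcont.intervalIntegrable _ _) h

/-- Telescoping bound. -/
lemma tele_aux (f G : ℕ → ℝ) (A : ℕ) :
    ∀ B, A ≤ B → (∀ k, A ≤ k → k < B → f (k + 1) ≤ G (k + 1) - G k) →
      ∑ k ∈ Finset.Ioc A B, f k ≤ G B - G A := by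
  refine Nat.le_induction ?_ ?_
  · intro _; simp
  · intro B hAB ih h
    rw [Finset.sum_Ioc_succ_top (by omega : A ≤ B)]
    have h1 := ih (fun k hk hk' => h k hk (by omega))
    have h2 := h B hAB (by omega)
    linarith

/-- Geometric-batch summation bound: for `η̃ > 0`, `a > 0` and `n_k ≥ (1+η̃)^{k−2}`,
`Σ_{k=1}^{M} (1+η̃)^{k−1} e^{−n_k a} ≤ ((1+η̃)/a)(e^{−a/(1+η̃)}/log(1+η̃) + 1/e)`. -/
theorem geometric_batch_sum_bound (η a : ℝ) (hη : 0 < η) (ha : 0 < a) (M : ℕ)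
    (n : ℕ → ℝ) (hn : ∀ k : ℕ, 1 ≤ k → (1 + η) ^ ((k : ℝ) - 2) ≤ n k) :
    ∑ k ∈ Finset.Icc 1 M, (1 + η) ^ ((k : ℝ) - 1) * Real.exp (-(n k * a)) ≤
      ((1 + η) / a) * (Real.exp (-(a / (1 + η))) / Real.log (1 + η) + 1 / Real.exp 1) := by
  have hc : (0:ℝ) < 1 + η := by linarith
  set L := Real.log (1 + η) with hLdef
  have hL : 0 < L := Real.log_pos (by linarith)
  have hcL : Real.exp L = 1 + η := Real.exp_log hc
  have hrpow : ∀ y : ℝ, (1 + η) ^ y = Real.exp (y * L) := by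
    intro y
    rw [Real.rpow_def_of_pos hc, mul_comm]
  -- existence of a cutoff index
  have hex : ∃ j : ℕ, 1 < a * Real.exp ((j : ℝ) * L) := by
    obtain ⟨j, hj⟩ := exists_nat_ge ((1 / a) / L)
    refine ⟨j, ?_⟩
    have h1 : 1 / a ≤ (j : ℝ) * L := (div_le_iff₀ hL).mp hj
    have h2 : (j : ℝ) * L + 1 ≤ Real.exp ((j : ℝ) * L) := by
      linarith [Real.add_one_le_exp ((j : ℝ) * L)]
    have h3 : 1 / a < Real.exp ((j : ℝ) * L) := by linarith
    calc (1:ℝ) = a * (1 / a) := by field_simp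
      _ < a * Real.exp ((j : ℝ) * L) := by
          exact mul_lt_mul_of_pos_left h3 ha
  set K := Nat.find hex with hKdef
  have hK1 : 1 < a * Real.exp ((K : ℝ) * L) := Nat.find_spec hex
  have hK2 : ∀ j : ℕ, j < K → a * Real.exp ((j : ℝ) * L) ≤ 1 :=
    fun j hj => not_lt.mp (Nat.find_min hex hj)
  set M' := max M (K + 2) with hM'def
  have hMM' : M ≤ M' := le_max_left _ _
  have hKM' : K + 2 ≤ M' := le_max_right _ _
  -- Step 1: termwise bound
  have step1 : ∑ k ∈ Finset.Icc 1 M, (1 + η) ^ ((k : ℝ) - 1) * Real.exp (-(n k * a)) ≤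
      ∑ k ∈ Finset.Icc 1 M, gfun L a (k : ℝ) := by
    apply Finset.sum_le_sum
    intro k hk
    have hk1 : 1 ≤ k := (Finset.mem_Icc.mp hk).1
    have hnk : Real.exp (((k : ℝ) - 2) * L) ≤ n k := by
      rw [← hrpow]; exact hn k hk1
    unfold gfun
    rw [hrpow]
    apply mul_le_mul_of_nonneg_left _ (Real.exp_pos _).le
    apply Real.exp_le_exp.mpr
    have : Real.exp (((k : ℝ) - 2) * L) * a ≤ n k * a :=
      mul_le_mul_of_nonneg_right hnk ha.le
    linarith
  -- Step 2: enlarge range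
  have step2 : ∑ k ∈ Finset.Icc 1 M, gfun L a (k : ℝ) ≤
      ∑ k ∈ Finset.Icc 1 M', gfun L a (k : ℝ) := by
    apply Finset.sum_le_sum_of_subset_of_nonneg
    · exact Finset.Icc_subset_Icc_right hMM'
    · intro i _ _; exact gfun_nonneg L a _
  -- rewrite as Ioc and split
  have hIcc : Finset.Icc 1 M' = Finset.Ioc 0 M' := by
    rw [← Finset.Icc_add_one_left_eq_Ioc, zero_add]
  have split1 : (∑ k ∈ Finset.Ioc 0 (K + 2), gfun L a (k : ℝ)) +
      ∑ k ∈ Finset.Ioc (K + 2) M', gfun L a (k : ℝ) =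
      ∑ k ∈ Finset.Ioc 0 M', gfun L a (k : ℝ) :=
    Finset.sum_Ioc_consecutive _ (Nat.zero_le _) hKM'
  have split2 : (∑ k ∈ Finset.Ioc 0 K, gfun L a (k : ℝ)) +
      ∑ k ∈ Finset.Ioc K (K + 2), gfun L a (k : ℝ) =
      ∑ k ∈ Finset.Ioc 0 (K + 2), gfun L a (k : ℝ) :=
    Finset.sum_Ioc_consecutive _ (Nat.zero_le _) (by omega)
  have hmid_eq : ∑ k ∈ Finset.Ioc K (K + 2), gfun L a (k : ℝ) =
      gfun L a ((K : ℝ) + 1) + gfun L a ((K : ℝ) + 2) := by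
    rw [show K + 2 = (K + 1) + 1 from rfl,
      Finset.sum_Ioc_succ_top (by omega : K ≤ K + 1),
      Finset.sum_Ioc_succ_top (le_refl K), Finset.Ioc_self, Finset.sum_empty]
    push_cast
    ring
  -- early part
  have early : ∑ k ∈ Finset.Ioc 0 K, gfun L a (k : ℝ) ≤
      Hfun L a ((K : ℝ) + 1) - Hfun L a 1 := by
    have := tele_aux (fun k => gfun L a (k : ℝ)) (fun j => Hfun L a ((j : ℝ) + 1)) 0 K
      (Nat.zero_le _) ?_
    · simpa using this
    · intro k _ hkK
      have hstep := step_le L a hL.ne' ha.ne' ((k : ℝ) + 1) (gfun L a ((k : ℝ) + 1)) ?_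
      · push_cast
        convert hstep using 3 <;> ring
      · intro x hx
        obtain ⟨hx1, hx2⟩ := hx
        apply gfun_mono L a _ _ ha
        · apply mul_le_mul_of_nonneg_left _ ha.le
          apply Real.exp_le_exp.mpr
          apply mul_le_mul_of_nonneg_right _ hL.le
          linarith
        · have hux : a * Real.exp ((x - 2) * L) ≤ a * Real.exp ((k : ℝ) * L) := by
            apply mul_le_mul_of_nonneg_left _ ha.le
            apply Real.exp_le_exp.mpr
            apply mul_le_mul_of_nonneg_right _ hL.le
            linarith
          exact le_trans hux (hK2 k hkK)
  -- middle part
  have hmid : gfun L a ((K : ℝ) + 1) + gfun L a ((K : ℝ) + 2) ≤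
      (Hfun L a ((K : ℝ) + 2) - Hfun L a ((K : ℝ) + 1)) +
        Real.exp L / a * (1 / Real.exp 1) := by
    set p := gfun L a ((K : ℝ) + 1)
    set q := gfun L a ((K : ℝ) + 2)
    have hminle : min p q ≤ Hfun L a (((K : ℝ) + 1) + 1) - Hfun L a ((K : ℝ) + 1) := by
      apply step_le L a hL.ne' ha.ne'
      intro x hx
      obtain ⟨hx1, hx2⟩ := hx
      by_cases hcase : a * Real.exp ((x - 2) * L) ≤ 1
      · refine le_trans (min_le_left _ _) ?_
        apply gfun_mono L a _ _ ha _ hcase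
        apply mul_le_mul_of_nonneg_left _ ha.le
        apply Real.exp_le_exp.mpr
        apply mul_le_mul_of_nonneg_right _ hL.le
        linarith
      · push_neg at hcase
        refine le_trans (min_le_right _ _) ?_
        apply gfun_anti L a x _ ha hcase.le
        apply mul_le_mul_of_nonneg_left _ ha.le
        apply Real.exp_le_exp.mpr
        apply mul_le_mul_of_nonneg_right _ hL.le
        linarith
    have hmaxle : max p q ≤ Real.exp L / a * (1 / Real.exp 1) :=
      max_le (gfun_le L a _ ha) (gfun_le L a _ ha)
    have := min_add_max p q
    have h1' : ((K : ℝ) + 1) + 1 = (K : ℝ) + 2 := by ring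
    rw [h1'] at hminle
    linarith
  -- late part
  have late : ∑ k ∈ Finset.Ioc (K + 2) M', gfun L a (k : ℝ) ≤
      Hfun L a ((M' : ℝ)) - Hfun L a ((K : ℝ) + 2) := by
    have := tele_aux (fun k => gfun L a (k : ℝ)) (fun j => Hfun L a (j : ℝ)) (K + 2) M'
      hKM' ?_
    · push_cast at this ⊢
      convert this using 3 <;> push_cast <;> ring
    · intro k hk _
      have hstep := step_le L a hL.ne' ha.ne' ((k : ℝ)) (gfun L a ((k : ℝ) + 1)) ?_
      · push_cast
        convert hstep using 3 <;> ring
      · intro x hx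
        obtain ⟨hx1, hx2⟩ := hx
        apply gfun_anti L a x _ ha
        · have hKk : a * Real.exp ((K : ℝ) * L) ≤ a * Real.exp ((x - 2) * L) := by
            apply mul_le_mul_of_nonneg_left _ ha.le
            apply Real.exp_le_exp.mpr
            apply mul_le_mul_of_nonneg_right _ hL.le
            have : (K : ℝ) + 2 ≤ (k : ℝ) := by exact_mod_cast hk
            linarith
          linarith
        · apply mul_le_mul_of_nonneg_left _ ha.le
          apply Real.exp_le_exp.mpr
          apply mul_le_mul_of_nonneg_right _ hL.le
          linarith
  -- combine
  have hHM : Hfun L a (M' : ℝ) ≤ 0 := by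
    unfold Hfun
    have h0 : 0 ≤ Real.exp L / (a * L) * Real.exp (-(Real.exp (((M' : ℝ) - 2) * L) * a)) := by
      positivity
    linarith
  have hH1 : -Hfun L a 1 = Real.exp L / (a * L) * Real.exp (-(a / (1 + η))) := by
    have he : Real.exp (((1 : ℝ) - 2) * L) * a = a / (1 + η) := by
      rw [show ((1 : ℝ) - 2) * L = -L by ring, Real.exp_neg, hcL, inv_mul_eq_div]
    unfold Hfun
    rw [he]
    ring
  have hRHS : ((1 + η) / a) * (Real.exp (-(a / (1 + η))) / L + 1 / Real.exp 1) =
      Real.exp L / (a * L) * Real.exp (-(a / (1 + η))) +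
        Real.exp L / a * (1 / Real.exp 1) := by
    rw [hcL]
    field_simp
  rw [hRHS]
  calc ∑ k ∈ Finset.Icc 1 M, (1 + η) ^ ((k : ℝ) - 1) * Real.exp (-(n k * a)) ≤
      ∑ k ∈ Finset.Icc 1 M', gfun L a (k : ℝ) := le_trans step1 step2
    _ = ∑ k ∈ Finset.Ioc 0 M', gfun L a (k : ℝ) := by rw [hIcc]
    _ ≤ Hfun L a (M' : ℝ) - Hfun L a 1 + Real.exp L / a * (1 / Real.exp 1) := by
        rw [← split1, ← split2, hmid_eq]
        linarith
    _ ≤ Real.exp L / (a * L) * Real.exp (-(a / (1 + η))) +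
        Real.exp L / a * (1 / Real.exp 1) := by linarith
end
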